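/- arXiv:math/0301348 — 8 statements merged into one kernel-verified Lean document; each statement's English description precedes it below -/
import Mathlib

section
/- Let K ≤ H ≤ G be a chain of subgroups of a group G. If K is co-amenable in H and H is co-amenable in G, then K is co-amenable in G. -/
/-- The space ℓ∞(X) of bounded real-valued functions on `X`,
as a submodule of `X → ℝ`. -/
def BddFns (X : Type*) : Submodule ℝ (X → ℝ) where
  carrier := {f | ∃ C : ℝ, ∀ x, |f x| ≤ C}
  add_mem' := by
    rintro f g ⟨C, hC⟩ ⟨D, hD⟩
    exact ⟨C + D, fun x => (abs_add_le _ _).trans (add_le_add (hC x) (hD x))⟩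
  zero_mem' := ⟨0, fun x => by simp⟩
  smul_mem' := by
    rintro c f ⟨C, hC⟩
    exact ⟨|c| * C, fun x => by
      simp only [Pi.smul_apply, smul_eq_mul, abs_mul]
      exact mul_le_mul_of_nonneg_left (hC x) (abs_nonneg c)⟩

/-- Left translation of a function on a `G`-set: `(g · f)(x) = f (g⁻¹ • x)`. -/
def lshift {G X : Type*} [Group G] [MulAction G X] (g : G) (f : X → ℝ) : X → ℝ :=
  fun x => f (g⁻¹ • x)

lemma lshift_mem {G X : Type*} [Group G] [MulAction G X] (g : G) {f : X → ℝ}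
    (hf : f ∈ BddFns X) : lshift g f ∈ BddFns X := by
  obtain ⟨C, hC⟩ := hf
  exact ⟨C, fun x => hC _⟩

/-- A `G`-invariant mean on ℓ∞(X): a linear functional `m` with `m 1 = 1`,
`m f ≥ 0` for `f ≥ 0` pointwise, invariant under the `G`-action. -/
structure InvariantMean (G : Type*) (X : Type*) [Group G] [MulAction G X] where
  toFun : (BddFns X) →ₗ[ℝ] ℝ
  norm_one : toFun ⟨(fun _ => 1), ⟨1, fun _ => by norm_num⟩⟩ = 1
  nonneg : ∀ f : BddFns X, (∀ x, 0 ≤ (f : X → ℝ) x) → 0 ≤ toFun f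
  invariant : ∀ (g : G) (f : BddFns X),
    toFun ⟨lshift g (f : X → ℝ), lshift_mem g f.2⟩ = toFun f

/-- A subgroup `H ≤ G` is co-amenable in `G` if there is a `G`-invariant mean
on ℓ∞(G/H), where `G/H` is the left coset space. -/
def Subgroup.Coamenable {G : Type*} [Group G] (H : Subgroup G) : Prop :=
  Nonempty (InvariantMean G (G ⧸ H))

/-- A group is amenable if there is a left-translation-invariant mean on ℓ∞(G). -/
def AmenableGroup (G : Type*) [Group G] : Prop :=
  Nonempty (InvariantMean G G)

section Aux

variable {G X : Type*} [Group G] [MulAction G X]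

lemma const_mem (X : Type*) (c : ℝ) : (fun _ : X => c) ∈ BddFns X :=
  ⟨|c|, fun _ => le_rfl⟩

lemma mean_const (m : InvariantMean G X) (c : ℝ) :
    m.toFun ⟨fun _ => c, const_mem X c⟩ = c := by
  have h : (⟨fun _ => c, const_mem X c⟩ : BddFns X)
      = c • ⟨fun _ => 1, ⟨1, fun _ => by norm_num⟩⟩ := by
    apply Subtype.ext; funext x; simp
  rw [h, map_smul, m.norm_one, smul_eq_mul, mul_one]

lemma mean_le (m : InvariantMean G X) {f : X → ℝ} (hf : f ∈ BddFns X)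
    {C : ℝ} (h : ∀ x, f x ≤ C) : m.toFun ⟨f, hf⟩ ≤ C := by
  have h0 := m.nonneg ((⟨fun _ => C, const_mem X C⟩ : BddFns X) - ⟨f, hf⟩)
    (fun x => sub_nonneg.2 (h x))
  rw [map_sub, mean_const] at h0
  linarith

lemma mean_abs_le (m : InvariantMean G X) {f : X → ℝ} (hf : f ∈ BddFns X)
    {C : ℝ} (h : ∀ x, |f x| ≤ C) : |m.toFun ⟨f, hf⟩| ≤ C := by
  rw [abs_le]
  constructor
  · have hneg : (-(f : X → ℝ)) ∈ BddFns X := neg_mem hf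
    have := mean_le m hneg (C := C) (fun x => by
      have := (abs_le.1 (h x)).1; simpa using neg_le_neg this)
    have hm : m.toFun ⟨-f, hneg⟩ = - m.toFun ⟨f, hf⟩ := by
      have : (⟨-f, hneg⟩ : BddFns X) = -⟨f, hf⟩ := rfl
      rw [this, map_neg]
    linarith [hm ▸ this]
  · exact mean_le m hf (fun x => (abs_le.1 (h x)).2)

end Aux

section Trans

variable {G : Type*} [Group G] (K H : Subgroup G) (hKH : K ≤ H)

/-- The map `H ⧸ (K ⊓ H) → G ⧸ K` induced by `h ↦ g * h`. -/
def phiMap (g : G) : H ⧸ K.subgroupOf H → G ⧸ K :=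
  Quotient.map' (fun h : H => g * (h : G)) (by
    intro a b hab
    rw [QuotientGroup.leftRel_apply] at hab ⊢
    rw [Subgroup.mem_subgroupOf] at hab
    simpa [mul_assoc] using hab)

lemma phiMap_mk (g : G) (h : H) :
    phiMap K H g (QuotientGroup.mk h) = QuotientGroup.mk (g * h) := rfl

lemma comp_mem {f : G ⧸ K → ℝ} (hf : f ∈ BddFns (G ⧸ K)) (g : G) :
    (fun x => f (phiMap K H g x)) ∈ BddFns (H ⧸ K.subgroupOf H) := by
  obtain ⟨C, hC⟩ := hf
  exact ⟨C, fun x => hC _⟩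

variable (mK : InvariantMean H (H ⧸ K.subgroupOf H))

/-- Average of `f` over the coset `gH` using the mean on `H ⧸ K`. -/
noncomputable def innerAvg (f : BddFns (G ⧸ K)) (g : G) : ℝ :=
  mK.toFun ⟨fun x => (f : G ⧸ K → ℝ) (phiMap K H g x), comp_mem K H f.2 g⟩

lemma innerAvg_mul (f : BddFns (G ⧸ K)) (g : G) (h : H) :
    innerAvg K H mK f (g * h) = innerAvg K H mK f g := by
  unfold innerAvg
  have key : (fun x => (f : G ⧸ K → ℝ) (phiMap K H (g * h) x))
      = lshift h⁻¹ (fun x => (f : G ⧸ K → ℝ) (phiMap K H g x)) := by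
    funext x
    induction x using Quotient.inductionOn' with
    | h h' =>
      show (f : G ⧸ K → ℝ) (phiMap K H (g * h) (QuotientGroup.mk h'))
        = (f : G ⧸ K → ℝ) (phiMap K H g (h⁻¹⁻¹ • QuotientGroup.mk h'))
      rw [inv_inv]
      have : (h • (QuotientGroup.mk h' : H ⧸ K.subgroupOf H))
          = QuotientGroup.mk (h * h') := rfl
      rw [this, phiMap_mk, phiMap_mk]
      push_cast
      rw [mul_assoc]
  have := mK.invariant h⁻¹ ⟨fun x => (f : G ⧸ K → ℝ) (phiMap K H g x), comp_mem K H f.2 g⟩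
  rw [← this]
  exact congrArg mK.toFun (Subtype.ext key)

/-- The averaged function on `G ⧸ H`. -/
noncomputable def outerFun (f : BddFns (G ⧸ K)) : G ⧸ H → ℝ := fun x =>
  Quotient.liftOn' x (innerAvg K H mK f) (by
    intro a b hab
    rw [QuotientGroup.leftRel_apply] at hab
    have hb : b = a * (⟨a⁻¹ * b, hab⟩ : H) := by simp
    rw [hb]
    exact (innerAvg_mul K H mK f a _).symm)

lemma outerFun_mk (f : BddFns (G ⧸ K)) (g : G) :
    outerFun K H mK f (QuotientGroup.mk g) = innerAvg K H mK f g := rfl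

lemma outerFun_mem (f : BddFns (G ⧸ K)) : outerFun K H mK f ∈ BddFns (G ⧸ H) := by
  obtain ⟨C, hC⟩ := f.2
  refine ⟨C, fun x => ?_⟩
  induction x using Quotient.inductionOn' with
  | h g =>
    show |innerAvg K H mK f g| ≤ C
    exact mean_abs_le mK _ (fun x => hC _)

variable (mG : InvariantMean G (G ⧸ H))

noncomputable def transMean : InvariantMean G (G ⧸ K) where
  toFun :=
    { toFun := fun f => mG.toFun ⟨outerFun K H mK f, outerFun_mem K H mK f⟩
      map_add' := by
        intro f g
        have h : (⟨outerFun K H mK (f + g), outerFun_mem K H mK (f + g)⟩ : BddFns (G ⧸ H))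
            = ⟨outerFun K H mK f, outerFun_mem K H mK f⟩
              + ⟨outerFun K H mK g, outerFun_mem K H mK g⟩ := by
          apply Subtype.ext
          funext x
          induction x using Quotient.inductionOn' with
          | h y =>
            show innerAvg K H mK (f + g) y
              = innerAvg K H mK f y + innerAvg K H mK g y
            unfold innerAvg
            rw [← map_add]
            congr 1
        show mG.toFun ⟨outerFun K H mK (f + g), outerFun_mem K H mK (f + g)⟩ = _
        rw [h, map_add]
      map_smul' := by
        intro c f
        have h : (⟨outerFun K H mK (c • f), outerFun_mem K H mK (c • f)⟩ : BddFns (G ⧸ H))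
            = c • ⟨outerFun K H mK f, outerFun_mem K H mK f⟩ := by
          apply Subtype.ext
          funext x
          induction x using Quotient.inductionOn' with
          | h y =>
            show innerAvg K H mK (c • f) y = c * innerAvg K H mK f y
            unfold innerAvg
            rw [← smul_eq_mul, ← map_smul]
            congr 1
        show mG.toFun ⟨outerFun K H mK (c • f), outerFun_mem K H mK (c • f)⟩ = _
        rw [h, map_smul, RingHom.id_apply, smul_eq_mul] }
  norm_one := by
    have h1 : outerFun K H mK ⟨fun _ => (1 : ℝ), ⟨1, fun _ => by norm_num⟩⟩
        = fun _ => (1 : ℝ) := by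
      funext x
      induction x using Quotient.inductionOn' with
      | h g =>
        show innerAvg K H mK ⟨fun _ => (1 : ℝ), ⟨1, fun _ => by norm_num⟩⟩ g = 1
        exact mK.norm_one
    have h2 : (⟨outerFun K H mK ⟨fun _ => (1 : ℝ), ⟨1, fun _ => by norm_num⟩⟩,
        outerFun_mem K H mK ⟨fun _ => (1 : ℝ), ⟨1, fun _ => by norm_num⟩⟩⟩ : BddFns (G ⧸ H))
        = ⟨fun _ => (1 : ℝ), ⟨1, fun _ => by norm_num⟩⟩ := Subtype.ext h1
    exact (congrArg mG.toFun h2).trans mG.norm_one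
  nonneg := by
    intro f hf
    apply mG.nonneg
    intro x
    induction x using Quotient.inductionOn' with
    | h g =>
      show 0 ≤ innerAvg K H mK f g
      exact mK.nonneg _ (fun x => hf _)
  invariant := by
    intro g f
    have key : (⟨outerFun K H mK ⟨lshift g (f : G ⧸ K → ℝ), lshift_mem g f.2⟩,
        outerFun_mem K H mK ⟨lshift g (f : G ⧸ K → ℝ), lshift_mem g f.2⟩⟩ : BddFns (G ⧸ H))
        = ⟨lshift g (outerFun K H mK f), lshift_mem g (outerFun_mem K H mK f)⟩ := by
      apply Subtype.ext
      funext x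
      induction x using Quotient.inductionOn' with
      | h y =>
        show innerAvg K H mK ⟨lshift g (f : G ⧸ K → ℝ), lshift_mem g f.2⟩ y
          = outerFun K H mK f (g⁻¹ • QuotientGroup.mk y)
        have hsm : (g⁻¹ • (QuotientGroup.mk y : G ⧸ H)) = QuotientGroup.mk (g⁻¹ * y) := rfl
        rw [hsm, outerFun_mk]
        unfold innerAvg
        congr 1
        apply Subtype.ext
        funext x
        induction x using Quotient.inductionOn' with
        | h h' =>
          show lshift g (f : G ⧸ K → ℝ) (phiMap K H y (QuotientGroup.mk h'))
            = (f : G ⧸ K → ℝ) (phiMap K H (g⁻¹ * y) (QuotientGroup.mk h'))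
          rw [phiMap_mk, phiMap_mk]
          show (f : G ⧸ K → ℝ) (QuotientGroup.mk (g⁻¹ * (y * ↑h')))
            = (f : G ⧸ K → ℝ) (QuotientGroup.mk (g⁻¹ * y * ↑h'))
          rw [mul_assoc]
    exact (congrArg mG.toFun key).trans
      (mG.invariant g ⟨outerFun K H mK f, outerFun_mem K H mK f⟩)

end Trans

/-- If `K ≤ H ≤ G`, `K` is co-amenable in `H` and `H` is co-amenable in `G`,
then `K` is co-amenable in `G`. -/
theorem coamenable_trans {G : Type*} [Group G] (K H : Subgroup G) (hKH : K ≤ H)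
    (hK : (K.subgroupOf H).Coamenable) (hH : H.Coamenable) :
    K.Coamenable := by
  obtain ⟨mK⟩ := hK
  obtain ⟨mG⟩ := hH
  exact ⟨transMean K H mK mG⟩
end

section
/- Let K be a normal subgroup of a group G and let H be a subgroup with K ≤ H ≤ G. If K is co-amenable in G, then K is co-amenable in H. -/
/-- If `K ⊴ G` is normal, `K ≤ H ≤ G`, and `K` is co-amenable in `G`,
then `K` is co-amenable in `H`. -/
theorem coamenable_in_intermediate_of_normal {G : Type*} [Group G] (K H : Subgroup G)
    [K.Normal] (hKH : K ≤ H) (hK : K.Coamenable) :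
    (K.subgroupOf H).Coamenable := by
  classical
  obtain ⟨m⟩ := hK
  -- stabilizer lemma: any g fixing a point of G⧸K lies in K
  have stab : ∀ (g : G) (x : G ⧸ K), g • x = x → g ∈ K := by
    intro g x
    induction x using QuotientGroup.induction_on with
    | H a =>
      intro h
      have h' : ((g * a : G) : G ⧸ K) = (a : G ⧸ K) := h
      rw [QuotientGroup.eq] at h'
      have : a * ((g * a)⁻¹ * a) * a⁻¹ ∈ K := Subgroup.Normal.conj_mem ‹K.Normal› _ h' a
      simpa [mul_assoc] using (inv_mem_iff.mp (by simpa [mul_inv_rev, mul_assoc] using this))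
  -- orbit representative
  let c : G ⧸ K → G ⧸ K := fun x => (Quotient.mk (MulAction.orbitRel H (G ⧸ K)) x).out
  have hc_orbit : ∀ x : G ⧸ K, ∃ h : H, (h : G) • c x = x := by
    intro x
    have h1 : (Quotient.mk (MulAction.orbitRel H (G ⧸ K)) (c x)) =
        Quotient.mk (MulAction.orbitRel H (G ⧸ K)) x := Quotient.out_eq _
    have h2 : c x ∈ MulAction.orbit H x := Quotient.exact h1
    obtain ⟨h, hh⟩ := h2
    refine ⟨h⁻¹, ?_⟩
    have hh' : (h : G) • x = c x := hh
    rw [← hh', smul_smul]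
    simp
  have hc_const : ∀ (h : H) (x : G ⧸ K), c ((h : G) • x) = c x := by
    intro h x
    have : (Quotient.mk (MulAction.orbitRel H (G ⧸ K)) ((h : G) • x)) =
        Quotient.mk (MulAction.orbitRel H (G ⧸ K)) x :=
      Quotient.sound (⟨h, rfl⟩ : (h : G) • x ∈ MulAction.orbit H x)
    simp only [c, this]
  let p : G ⧸ K → H ⧸ (K.subgroupOf H) := fun x =>
    QuotientGroup.mk (Classical.choose (hc_orbit x))
  have wellp : ∀ (h : H) (x : G ⧸ K), p ((h : G) • x) = h • p x := by
    intro h x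
    set h1 := Classical.choose (hc_orbit ((h : G) • x)) with hh1
    set h2 := Classical.choose (hc_orbit x) with hh2
    have e1 : (h1 : G) • c ((h : G) • x) = (h : G) • x := Classical.choose_spec (hc_orbit _)
    have e2 : (h2 : G) • c x = x := Classical.choose_spec (hc_orbit x)
    rw [hc_const] at e1
    have key : (((h * h2)⁻¹ * h1 : H) : G) • c x = c x := by
      have coe1 : (((h * h2)⁻¹ * h1 : H) : G) = ((h : G) * (h2 : G))⁻¹ * (h1 : G) := by
        push_cast; ring
      have step : ((h : G) * (h2 : G)) • c x = (h1 : G) • c x := by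
        rw [mul_smul, e2, e1]
      rw [coe1, mul_smul, ← step, inv_smul_smul]
    have hk : ((h * h2)⁻¹ * h1 : H) ∈ K.subgroupOf H := by
      rw [Subgroup.mem_subgroupOf]
      exact stab _ _ key
    show QuotientGroup.mk h1 = h • QuotientGroup.mk h2
    have hsm : (h • QuotientGroup.mk h2 : H ⧸ K.subgroupOf H) = QuotientGroup.mk (h * h2) := rfl
    rw [hsm, QuotientGroup.eq]
    have := inv_mem hk
    simpa [mul_inv_rev, mul_assoc] using this
  -- build the mean
  have bdd : ∀ f : BddFns (H ⧸ K.subgroupOf H),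
      ((f : (H ⧸ K.subgroupOf H) → ℝ) ∘ p) ∈ BddFns (G ⧸ K) := by
    rintro ⟨f, C, hC⟩
    exact ⟨C, fun x => hC _⟩
  refine ⟨⟨{ toFun := fun f => m.toFun ⟨(f : (H ⧸ K.subgroupOf H) → ℝ) ∘ p, bdd f⟩
             map_add' := ?_
             map_smul' := ?_ }, ?_, ?_, ?_⟩⟩
  · intro f g
    rw [← map_add]
    exact congrArg m.toFun (Subtype.ext rfl)
  · intro r f
    simp only [RingHom.id_apply]
    rw [← map_smul]
    exact congrArg m.toFun (Subtype.ext rfl)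
  · exact (congrArg m.toFun (Subtype.ext rfl)).trans m.norm_one
  · intro f hf
    exact m.nonneg _ (fun x => hf (p x))
  · intro h f
    have heq : (lshift h (f : (H ⧸ K.subgroupOf H) → ℝ)) ∘ p =
        lshift (h : G) ((f : (H ⧸ K.subgroupOf H) → ℝ) ∘ p) := by
      funext x
      show (f : (H ⧸ K.subgroupOf H) → ℝ) (h⁻¹ • p x) =
        (f : (H ⧸ K.subgroupOf H) → ℝ) (p ((h : G)⁻¹ • x))
      rw [show ((h : G)⁻¹) = ((h⁻¹ : H) : G) from rfl, wellp h⁻¹ x]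
    have e2 : (⟨(lshift h (f : (H ⧸ K.subgroupOf H) → ℝ)) ∘ p,
          bdd ⟨lshift h (f : (H ⧸ K.subgroupOf H) → ℝ), lshift_mem h f.2⟩⟩ : BddFns (G ⧸ K)) =
        ⟨lshift (h : G) ((f : (H ⧸ K.subgroupOf H) → ℝ) ∘ p),
          lshift_mem (h : G) (bdd f)⟩ := Subtype.ext heq
    exact (congrArg m.toFun e2).trans (m.invariant (h : G) ⟨_, bdd f⟩)
end

section
/- There exist a group G, a normal subgroup H of G, and a normal subgroup K of H, such that K is co-amenable in G but K is not co-amenable in H. -/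
open Filter Finset

section Ulim

lemma exists_tendsto_ultra (U : Ultrafilter ℕ) (a : ℕ → ℝ) (C : ℝ) (h : ∀ n, |a n| ≤ C) :
    ∃ L, Tendsto a (U : Filter ℕ) (nhds L) := by
  have hc : IsCompact (Set.Icc (-C) C) := isCompact_Icc
  have hle : (U.map a : Filter ℝ) ≤ Filter.principal (Set.Icc (-C) C) := by
    rw [le_principal_iff]
    have : ∀ n, a n ∈ Set.Icc (-C) C := fun n => abs_le.mp (h n)
    exact Filter.mem_map.mpr (Filter.univ_mem' this)
  obtain ⟨L, _, hL⟩ := hc.ultrafilter_le_nhds (U.map a) hle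
  exact ⟨L, hL⟩

lemma sum_shift (u : ℕ → ℝ) (p : ℕ) : ∀ n : ℕ,
    ∑ j ∈ range n, u (j + p) = (∑ j ∈ range (n + p), u j) - ∑ j ∈ range p, u j := by
  intro n
  induction n with
  | zero => simp
  | succ n ih =>
    rw [Finset.sum_range_succ, ih]
    have : n + 1 + p = (n + p) + 1 := by omega
    rw [this, Finset.sum_range_succ]
    ring

lemma abs_sum_le_card_mul (u : ℕ → ℝ) (C : ℝ) (h : ∀ n, |u n| ≤ C) (n : ℕ) :
    |∑ j ∈ range n, u j| ≤ n * C := by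
  calc |∑ j ∈ range n, u j| ≤ ∑ j ∈ range n, |u j| := Finset.abs_sum_le_sum_abs _ _
    _ ≤ ∑ _j ∈ range n, C := Finset.sum_le_sum fun j _ => h j
    _ = n * C := by simp [mul_comm]

lemma cesaro_diff (u v : ℕ → ℝ) (C : ℝ) (p q n₀ : ℕ)
    (hu : ∀ n, |u n| ≤ C) (hv : ∀ n, |v n| ≤ C)
    (h : ∀ n, n₀ ≤ n → u (n + p) = v (n + q)) :
    Tendsto (fun n : ℕ => (∑ j ∈ range n, u j) / n - (∑ j ∈ range n, v j) / n)
      atTop (nhds 0) := by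
  set D : ℝ := n₀ * (2 * C) + p * C + q * C + p * C + q * C with hD
  have key : ∀ n, n₀ ≤ n → |(∑ j ∈ range n, u j) - ∑ j ∈ range n, v j| ≤ D := by
    intro n hn
    have e1 : ∑ j ∈ range n, u j
        = (∑ j ∈ range n, u (j + p)) + (∑ j ∈ range p, u j) - ∑ j ∈ range p, u (j + n) := by
      have a1 := sum_shift u p n
      have a2 := sum_shift u n p
      have : p + n = n + p := by omega
      rw [this] at a2
      rw [a1, a2]; ring
    have e2 : ∑ j ∈ range n, v j
        = (∑ j ∈ range n, v (j + q)) + (∑ j ∈ range q, v j) - ∑ j ∈ range q, v (j + n) := by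
      have a1 := sum_shift v q n
      have a2 := sum_shift v n q
      have : q + n = n + q := by omega
      rw [this] at a2
      rw [a1, a2]; ring
    have e3 : ∑ j ∈ range n, (u (j + p) - v (j + q)) = ∑ j ∈ range n₀, (u (j + p) - v (j + q)) := by
      rw [← Finset.sum_range_add_sum_Ico _ hn]
      have : ∑ j ∈ Finset.Ico n₀ n, (u (j + p) - v (j + q)) = 0 := by
        apply Finset.sum_eq_zero
        intro j hj
        have := h j (Finset.mem_Ico.mp hj).1
        simp [this]
      rw [this, add_zero]
    have b1 : |∑ j ∈ range n₀, (u (j + p) - v (j + q))| ≤ n₀ * (2 * C) := by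
      apply abs_sum_le_card_mul
      intro j
      calc |u (j + p) - v (j + q)| ≤ |u (j + p)| + |v (j + q)| := abs_sub _ _
        _ ≤ C + C := add_le_add (hu _) (hv _)
        _ = 2 * C := by ring
    have b2 : |∑ j ∈ range p, u j| ≤ p * C := abs_sum_le_card_mul u C hu p
    have b3 : |∑ j ∈ range q, v j| ≤ q * C := abs_sum_le_card_mul v C hv q
    have b4 : |∑ j ∈ range p, u (j + n)| ≤ p * C :=
      abs_sum_le_card_mul _ C (fun j => hu _) p
    have b5 : |∑ j ∈ range q, v (j + n)| ≤ q * C :=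
      abs_sum_le_card_mul _ C (fun j => hv _) q
    have expand : (∑ j ∈ range n, u j) - ∑ j ∈ range n, v j
        = (∑ j ∈ range n₀, (u (j + p) - v (j + q))) + (∑ j ∈ range p, u j)
          - (∑ j ∈ range q, v j) - (∑ j ∈ range p, u (j + n))
          + ∑ j ∈ range q, v (j + n) := by
      rw [e1, e2, ← e3, Finset.sum_sub_distrib]; ring
    rw [expand, hD]
    calc |∑ j ∈ range n₀, (u (j + p) - v (j + q)) + ∑ j ∈ range p, u j
          - ∑ j ∈ range q, v j - ∑ j ∈ range p, u (j + n) + ∑ j ∈ range q, v (j + n)|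
        ≤ |∑ j ∈ range n₀, (u (j + p) - v (j + q))| + |∑ j ∈ range p, u j|
          + |∑ j ∈ range q, v j| + |∑ j ∈ range p, u (j + n)| + |∑ j ∈ range q, v (j + n)| := by
          have h1 := abs_add_le (∑ j ∈ range n₀, (u (j + p) - v (j + q))) (∑ j ∈ range p, u j)
          have h2 := abs_sub (∑ j ∈ range n₀, (u (j + p) - v (j + q)) + ∑ j ∈ range p, u j)
            (∑ j ∈ range q, v j)
          have h3 := abs_sub (∑ j ∈ range n₀, (u (j + p) - v (j + q)) + ∑ j ∈ range p, u j
            - ∑ j ∈ range q, v j) (∑ j ∈ range p, u (j + n))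
          have h4 := abs_add_le (∑ j ∈ range n₀, (u (j + p) - v (j + q)) + ∑ j ∈ range p, u j
            - ∑ j ∈ range q, v j - ∑ j ∈ range p, u (j + n)) (∑ j ∈ range q, v (j + n))
          linarith
      _ ≤ n₀ * (2 * C) + p * C + q * C + p * C + q * C := by linarith
  apply squeeze_zero_norm' (a := fun n : ℕ => D / n)
  · filter_upwards [Filter.eventually_ge_atTop n₀] with n hn
    rw [Real.norm_eq_abs, div_sub_div_same, abs_div, abs_of_nonneg (by positivity : (0:ℝ) ≤ (n:ℝ))]
    exact div_le_div_of_nonneg_right (key n hn) (Nat.cast_nonneg n)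
  · exact tendsto_const_div_atTop_nhds_zero_nat D

end Ulim

open Filter Finset

section MeanConstruction

variable {Γ X : Type*} [Group Γ] [MulAction Γ X]

/-- If there is a sequence of points escaping to infinity appropriately,
there is an invariant mean. -/
noncomputable def invariantMeanOfEscaping (x : ℤ → X)
    (hx : ∀ g : Γ, ∃ (m : ℤ) (j₀ : ℕ), ∀ j : ℕ, j₀ ≤ j → g⁻¹ • x (j : ℤ) = x ((j : ℤ) + m)) :
    InvariantMean Γ X := by
  classical
  set U : Ultrafilter ℕ := Ultrafilter.of atTop with hU
  have hUle : (U : Filter ℕ) ≤ atTop := Ultrafilter.of_le _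
  -- the averaging sequence
  let A : (BddFns X) → ℕ → ℝ := fun f n => (∑ j ∈ range n, (f : X → ℝ) (x (j : ℤ))) / n
  have hAbd : ∀ f : BddFns X, ∃ C, (∀ y, |(f : X → ℝ) y| ≤ C) ∧ ∀ n, |A f n| ≤ C := by
    intro f
    obtain ⟨C, hC⟩ := f.2
    refine ⟨C, hC, fun n => ?_⟩
    have h0C : 0 ≤ C := le_trans (abs_nonneg _) (hC (x 0))
    have := abs_sum_le_card_mul (fun j => (f : X → ℝ) (x (j : ℤ))) C (fun j => hC _) n
    rcases Nat.eq_zero_or_pos n with h0 | h0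
    · subst h0
      have hA0 : A f 0 = 0 := by simp [A]
      rw [hA0]; simpa using h0C
    · have hn0 : (0:ℝ) < n := by exact_mod_cast h0
      rw [abs_div, abs_of_nonneg (le_of_lt hn0)]
      rw [div_le_iff₀ hn0]
      linarith [this]
  let μ : (BddFns X) → ℝ := fun f => limUnder (U : Filter ℕ) (A f)
  have hTendsto : ∀ f : BddFns X, Tendsto (A f) (U : Filter ℕ) (nhds (μ f)) := by
    intro f
    obtain ⟨C, _, hC⟩ := hAbd f
    obtain ⟨L, hL⟩ := exists_tendsto_ultra U (A f) C hC
    have : μ f = L := hL.limUnder_eq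
    rwa [this]
  have hadd : ∀ f g : BddFns X, μ (f + g) = μ f + μ g := by
    intro f g
    have h1 : A (f + g) = fun n => A f n + A g n := by
      funext n
      simp only [A, Submodule.coe_add, Pi.add_apply, Finset.sum_add_distrib, add_div]
    have : Tendsto (A (f + g)) (U : Filter ℕ) (nhds (μ f + μ g)) := by
      rw [h1]; exact (hTendsto f).add (hTendsto g)
    exact this.limUnder_eq
  have hsmul : ∀ (c : ℝ) (f : BddFns X), μ (c • f) = c * μ f := by
    intro c f
    have h1 : A (c • f) = fun n => c * A f n := by
      funext n
      simp only [A, Submodule.coe_smul, Pi.smul_apply, smul_eq_mul, ← Finset.mul_sum,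
        mul_div_assoc]
    have : Tendsto (A (c • f)) (U : Filter ℕ) (nhds (c * μ f)) := by
      rw [h1]; exact (hTendsto f).const_mul c
    exact this.limUnder_eq
  refine
    { toFun := { toFun := μ, map_add' := hadd, map_smul' := hsmul }
      norm_one := ?_
      nonneg := ?_
      invariant := ?_ }
  · show μ _ = 1
    have : Tendsto (A ⟨(fun _ => 1), ⟨1, fun _ => by norm_num⟩⟩) (U : Filter ℕ) (nhds 1) := by
      apply Tendsto.congr' _ (tendsto_const_nhds)
      apply Filter.Eventually.filter_mono hUle
      filter_upwards [Filter.eventually_ge_atTop 1] with n hn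
      have hn0 : (n : ℝ) ≠ 0 := by positivity
      simp only [A]
      rw [Finset.sum_const, Finset.card_range]
      simp [hn0]
    exact this.limUnder_eq
  · intro f hf
    refine ge_of_tendsto' (hTendsto f) fun n => ?_
    apply div_nonneg _ (Nat.cast_nonneg n)
    exact Finset.sum_nonneg fun j _ => hf _
  · intro g f
    obtain ⟨m, j₀, hm⟩ := hx g
    obtain ⟨C, hCf, _⟩ := hAbd f
    set f' : BddFns X := ⟨lshift g (f : X → ℝ), lshift_mem g f.2⟩ with hf'
    show μ f' = μ f
    set u : ℕ → ℝ := fun n => (f' : X → ℝ) (x (n : ℤ)) with hu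
    set v : ℕ → ℝ := fun n => (f : X → ℝ) (x (n : ℤ)) with hv
    have hub : ∀ n, |u n| ≤ C := fun n => hCf _
    have hvb : ∀ n, |v n| ≤ C := fun n => hCf _
    have hdiff : Tendsto (fun n : ℕ => A f' n - A f n) atTop (nhds 0) := by
      have hpq : ∀ n : ℕ, j₀ ≤ n → u (n + (-m).toNat) = v (n + m.toNat) := by
        intro n hn
        have h1 : u (n + (-m).toNat) = (f : X → ℝ) (g⁻¹ • x ((n + (-m).toNat : ℕ) : ℤ)) := rfl
        rw [h1, hm _ (by omega)]
        have : ((n + (-m).toNat : ℕ) : ℤ) + m = ((n + m.toNat : ℕ) : ℤ) := by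
          push_cast; omega
        rw [this]
      exact cesaro_diff u v C ((-m).toNat) (m.toNat) j₀ hub hvb hpq
    have : Tendsto (A f') (U : Filter ℕ) (nhds (0 + μ f)) := by
      have h2 : A f' = fun n => (A f' n - A f n) + A f n := by funext n; ring
      rw [h2]
      exact Tendsto.add (hdiff.mono_left hUle) (hTendsto f)
    rw [zero_add] at this
    exact this.limUnder_eq

end MeanConstruction

set_option synthInstance.maxHeartbeats 1000000
set_option maxHeartbeats 1600000

section GroupSetup

open SemidirectProduct

universe u

/-- The free group on two generators. -/
abbrev Lam : Type u := FreeGroup (ULift.{u} Bool)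

/-- Finitely supported functions `ℤ → Lam`, as a subgroup of the product. -/
def Nsub : Subgroup (ℤ → Lam) where
  carrier := {f | (Function.mulSupport f).Finite}
  one_mem' := by simp [Function.mulSupport_one]
  mul_mem' := by
    intro a b ha hb
    exact (ha.union hb).subset (Function.mulSupport_mul a b)
  inv_mem' := by
    intro a ha
    simpa [Function.mulSupport_inv] using ha

/-- The shift automorphism by `m` on `Nsub`. -/
def shiftAut (m : ℤ) : Nsub ≃* Nsub where
  toFun f := ⟨fun i => (f : ℤ → Lam) (i - m), by
    show (Function.mulSupport fun i => (f : ℤ → Lam) (i - m)).Finite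
    have : (Function.mulSupport fun i => (f : ℤ → Lam) (i - m))
        = (fun j => j + m) '' Function.mulSupport (f : ℤ → Lam) := by
      ext i
      simp only [Function.mem_mulSupport, Set.mem_image]
      constructor
      · intro h; exact ⟨i - m, h, by ring⟩
      · rintro ⟨j, hj, rfl⟩; simpa using hj
    rw [this]
    exact (f.2).image _⟩
  invFun f := ⟨fun i => (f : ℤ → Lam) (i + m), by
    show (Function.mulSupport fun i => (f : ℤ → Lam) (i + m)).Finite
    have : (Function.mulSupport fun i => (f : ℤ → Lam) (i + m))
        = (fun j => j - m) '' Function.mulSupport (f : ℤ → Lam) := by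
      ext i
      simp only [Function.mem_mulSupport, Set.mem_image]
      constructor
      · intro h; exact ⟨i + m, h, by ring⟩
      · rintro ⟨j, hj, rfl⟩; simpa using hj
    rw [this]
    exact (f.2).image _⟩
  left_inv f := by ext i; simp
  right_inv f := by ext i; simp
  map_mul' f g := by ext i; simp [Subgroup.coe_mul]

@[simp] lemma shiftAut_apply (m : ℤ) (f : Nsub) (i : ℤ) :
    ((shiftAut m f : Nsub) : ℤ → Lam) i = (f : ℤ → Lam) (i - m) := rfl

/-- The action of `ℤ` on `Nsub` by shifts. -/
def shiftHom : Multiplicative ℤ →* MulAut Nsub :=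
  MonoidHom.mk' (fun m => shiftAut (Multiplicative.toAdd m)) (by
    intro a b
    ext f i
    show (f : ℤ → Lam) (i - (Multiplicative.toAdd a + Multiplicative.toAdd b))
      = (f : ℤ → Lam) (i - Multiplicative.toAdd a - Multiplicative.toAdd b)
    have h : i - (Multiplicative.toAdd a + Multiplicative.toAdd b)
        = i - Multiplicative.toAdd a - Multiplicative.toAdd b := by ring
    rw [h])

/-- The wreath product `F₂ ≀ ℤ`. -/
abbrev GG := Nsub ⋊[shiftHom] Multiplicative ℤ

/-- The base subgroup `⊕_ℤ F₂`. -/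
def Hsub : Subgroup GG := (rightHom : GG →* Multiplicative ℤ).ker

instance : Hsub.Normal := MonoidHom.normal_ker _

lemma mem_Hsub {g : GG} : g ∈ Hsub ↔ g.right = 1 := Iff.rfl

/-- The subgroup supported on positive coordinates. -/
def Ksub : Subgroup GG where
  carrier := {g | g.right = 1 ∧ ∀ i : ℤ, i ≤ 0 → ((g.left : Nsub) : ℤ → Lam) i = 1}
  one_mem' := by
    constructor
    · rfl
    · intro i _
      show ((1 : Nsub) : ℤ → Lam) i = 1
      rfl
  mul_mem' := by
    rintro a b ⟨har, hal⟩ ⟨hbr, hbl⟩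
    constructor
    · show a.right * b.right = 1
      rw [har, hbr, mul_one]
    · intro i hi
      show (((a * b).left : Nsub) : ℤ → Lam) i = 1
      rw [SemidirectProduct.mul_left, har]
      rw [map_one shiftHom]
      show ((a.left * b.left : Nsub) : ℤ → Lam) i = 1
      rw [Subgroup.coe_mul, Pi.mul_apply, hal i hi, hbl i hi, one_mul]
  inv_mem' := by
    rintro a ⟨har, hal⟩
    constructor
    · show a.right⁻¹ = 1
      rw [har, inv_one]
    · intro i hi
      show ((a⁻¹.left : Nsub) : ℤ → Lam) i = 1
      rw [SemidirectProduct.inv_left, har, inv_one, map_one shiftHom]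
      show ((a.left⁻¹ : Nsub) : ℤ → Lam) i = 1
      rw [Subgroup.coe_inv, Pi.inv_apply, hal i hi, inv_one]

lemma Ksub_le_Hsub : Ksub ≤ Hsub := fun g hg => hg.1

lemma mem_Ksub {g : GG} :
    g ∈ Ksub ↔ g.right = 1 ∧ ∀ i : ℤ, i ≤ 0 → ((g.left : Nsub) : ℤ → Lam) i = 1 := Iff.rfl

lemma Ksub_subgroupOf_normal : (Ksub.subgroupOf Hsub).Normal := by
  constructor
  intro n hn h
  rw [Subgroup.mem_subgroupOf] at hn ⊢
  obtain ⟨hnr, hnl⟩ := hn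
  have hhr : (h : GG).right = 1 := h.2
  constructor
  · show ((h : GG) * n * (h : GG)⁻¹).right = 1
    simp only [SemidirectProduct.mul_right, SemidirectProduct.inv_right]
    rw [hhr, hnr]; simp
  · intro i hi
    have hleft : (((h : GG) * (n : GG) * (h : GG)⁻¹).left : ℤ → Lam) i
        = ((h : GG).left : ℤ → Lam) i * ((n : GG).left : ℤ → Lam) i
          * (((h : GG).left : ℤ → Lam) i)⁻¹ := by
      simp only [SemidirectProduct.mul_left, SemidirectProduct.inv_left,
        SemidirectProduct.mul_right]
      rw [hhr, hnr]
      simp only [one_mul, mul_one, inv_one, map_one shiftHom]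
      show (((h : GG).left * (n:GG).left * ((h:GG).left)⁻¹ : Nsub) : ℤ → Lam) i = _
      simp [Subgroup.coe_mul, Subgroup.coe_inv]
    show (((h : GG) * (n : GG) * (h : GG)⁻¹).left : ℤ → Lam) i = 1
    rw [hleft, hnl i hi]
    simp

end GroupSetup

section Coamen

open SemidirectProduct

/-- The escaping sequence of cosets in `GG ⧸ Ksub`. -/
noncomputable def xseq (j : ℤ) : GG ⧸ Ksub :=
  QuotientGroup.mk (inr (Multiplicative.ofAdd (-j)))

lemma xseq_escaping (g : GG) :
    ∃ (m : ℤ) (j₀ : ℕ), ∀ j : ℕ, j₀ ≤ j → g⁻¹ • xseq (j : ℤ) = xseq ((j : ℤ) + m) := by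
  set m : ℤ := Multiplicative.toAdd g.right with hm
  obtain ⟨c, hc⟩ := (g.left.2 : (Function.mulSupport (g.left : ℤ → Lam)).Finite).bddBelow
  refine ⟨m, (1 - c).toNat, fun j hj => ?_⟩
  have hjc : (j : ℤ) ≥ 1 - c := le_trans (Int.self_le_toNat _) (by exact_mod_cast hj)
  show g⁻¹ • (QuotientGroup.mk (inr (Multiplicative.ofAdd (-(j : ℤ)))) : GG ⧸ Ksub)
    = QuotientGroup.mk (inr (Multiplicative.ofAdd (-((j : ℤ) + m))))
  rw [MulAction.Quotient.smul_mk]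
  rw [QuotientGroup.eq]
  have hexp : (g⁻¹ • inr (Multiplicative.ofAdd (-(j : ℤ))) : GG)⁻¹
      * inr (Multiplicative.ofAdd (-((j : ℤ) + m)))
      = inr (Multiplicative.ofAdd (j : ℤ)) * g * inr (Multiplicative.ofAdd (-((j : ℤ) + m))) := by
    rw [smul_eq_mul]
    rw [mul_inv_rev, inv_inv, ← map_inv, ← ofAdd_neg, neg_neg]
  rw [hexp]
  constructor
  · show ((inr (Multiplicative.ofAdd (j:ℤ)) * g * inr (Multiplicative.ofAdd (-((j:ℤ) + m)))
      : GG)).right = 1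
    simp only [SemidirectProduct.mul_right, SemidirectProduct.right_inr]
    have : g.right = Multiplicative.ofAdd m := by rw [hm]; simp
    rw [this]
    rw [← ofAdd_add, ← ofAdd_add]
    have h0 : (j:ℤ) + m + (-(j:ℤ) - m) = 0 := by ring
    rw [show -((j:ℤ) + m) = -(j:ℤ) - m from by ring] 
    rw [h0, ofAdd_zero]
  · intro i hi
    have hleft : ((inr (Multiplicative.ofAdd (j:ℤ)) * g * inr (Multiplicative.ofAdd (-((j:ℤ) + m)))
        : GG)).left = shiftHom (Multiplicative.ofAdd (j:ℤ)) g.left := by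
      simp only [SemidirectProduct.mul_left, SemidirectProduct.left_inr,
        SemidirectProduct.right_inr, SemidirectProduct.left_inl, one_mul, map_one, mul_one]
    rw [hleft]
    show ((shiftAut (j:ℤ) g.left : Nsub) : ℤ → Lam) i = 1
    rw [shiftAut_apply]
    by_contra hne
    have hmem : i - (j:ℤ) ∈ Function.mulSupport (g.left : ℤ → Lam) := hne
    have := hc hmem
    omega

lemma Ksub_coamenable : Nonempty (InvariantMean GG (GG ⧸ Ksub)) :=
  ⟨invariantMeanOfEscaping xseq xseq_escaping⟩

end Coamen

section FreeGroupParadox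

open FreeGroup

lemma invRev_singleton (x : ULift.{u} Bool) (bb : Bool) :
    FreeGroup.invRev [(x, bb)] = [(x, !bb)] := by
  simp [FreeGroup.invRev]

lemma mk_singleton_inv (x : ULift.{u} Bool) (bb : Bool) :
    (FreeGroup.mk [(x, bb)])⁻¹ = FreeGroup.mk [(x, !bb)] := by
  rw [FreeGroup.inv_mk, invRev_singleton]

lemma toWord_cons_of_head_ne (x : ULift.{u} Bool) (bb : Bool) (w : Lam)
    (h : w.toWord.head? ≠ some (x, !bb)) :
    (FreeGroup.mk [(x, bb)] * w).toWord = (x, bb) :: w.toWord := by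
  conv_lhs => rw [← FreeGroup.mk_toWord (x := w)]
  rw [FreeGroup.mul_mk]
  show FreeGroup.reduce ((x, bb) :: w.toWord) = (x, bb) :: w.toWord
  rw [FreeGroup.reduce.cons]
  rw [FreeGroup.reduce_toWord]
  cases hw : w.toWord with
  | nil => rfl
  | cons hd tl =>
    show (if (x, bb).1 = hd.1 ∧ (x, bb).2 = !hd.2 then tl else (x, bb) :: hd :: tl)
      = (x, bb) :: hd :: tl
    rw [if_neg]
    rintro ⟨h1, h2⟩
    apply h
    rw [hw]
    have : hd = (x, !bb) := by
      ext
      · exact congrArg ULift.down h1.symm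
      · simp only [Prod.snd]
        cases hbd : hd.2 <;> cases bb <;> simp_all
    rw [this]
    rfl

/-- Head-letter sets in the free group. -/
def Wset (l : ULift.{u} Bool × Bool) : Set Lam := {w | w.toWord.head? = some l}

lemma mem_shift_Wset (x : ULift.{u} Bool) (bb : Bool) (w : Lam) (h : w ∉ Wset (x, bb)) :
    (FreeGroup.mk [(x, !bb)]) * w ∈ Wset (x, !bb) := by
  have hne : w.toWord.head? ≠ some (x, !(!bb)) := by
    rw [Bool.not_not]
    exact h
  have := toWord_cons_of_head_ne x (!bb) w hne
  show ((FreeGroup.mk [(x, !bb)]) * w).toWord.head? = some (x, !bb)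
  rw [this]
  rfl

theorem no_invariant_mean_freegroup : ¬ Nonempty (InvariantMean Lam.{u} Lam.{u}) := by
  classical
  rintro ⟨M⟩
  set ν := M.toFun with hν
  -- indicator functions
  have indmem : ∀ S : Set Lam, (fun w => if w ∈ S then (1:ℝ) else 0) ∈ BddFns Lam := by
    intro S
    refine ⟨1, fun w => ?_⟩
    by_cases h : w ∈ S <;> simp [h]
  set ind : Set Lam → BddFns Lam := fun S => ⟨fun w => if w ∈ S then (1:ℝ) else 0, indmem S⟩
    with hind
  set one' : BddFns Lam := ⟨(fun _ => 1), ⟨1, fun _ => by norm_num⟩⟩ with hone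
  have mono : ∀ f g : BddFns Lam, (∀ x, (f : Lam → ℝ) x ≤ (g : Lam → ℝ) x) → ν f ≤ ν g := by
    intro f g h
    have h1 : 0 ≤ ν (g - f) := by
      apply M.nonneg
      intro x
      have : ((g - f : BddFns Lam) : Lam → ℝ) x = (g : Lam → ℝ) x - (f : Lam → ℝ) x := rfl
      rw [this]
      linarith [h x]
    have h2 : ν (g - f) = ν g - ν f := map_sub ν g f
    linarith
  have αnonneg : ∀ l, 0 ≤ ν (ind (Wset l)) := by
    intro l
    apply M.nonneg
    intro x
    show (0:ℝ) ≤ if x ∈ Wset l then 1 else 0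
    split <;> norm_num
  -- pair inequality
  have pair : ∀ (x : ULift.{u} Bool) (bb : Bool), 1 ≤ ν (ind (Wset (x, bb))) + ν (ind (Wset (x, !bb))) := by
    intro x bb
    set g : Lam := FreeGroup.mk [(x, bb)] with hg
    set B : BddFns Lam :=
      ⟨lshift g ((ind (Wset (x, !bb))) : Lam → ℝ), lshift_mem g (ind (Wset (x, !bb))).2⟩ with hB
    have hinv : ν B = ν (ind (Wset (x, !bb))) := M.invariant g _
    have hsum : ∀ w : Lam,
        (1:ℝ) ≤ ((ind (Wset (x, bb)) + B : BddFns Lam) : Lam → ℝ) w := by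
      intro w
      have hcoe : ((ind (Wset (x, bb)) + B : BddFns Lam) : Lam → ℝ) w
          = (if w ∈ Wset (x, bb) then (1:ℝ) else 0) + lshift g ((ind (Wset (x, !bb))) : Lam → ℝ) w :=
        rfl
      rw [hcoe]
      by_cases hw : w ∈ Wset (x, bb)
      · rw [if_pos hw]
        have : (0:ℝ) ≤ lshift g ((ind (Wset (x, !bb))) : Lam → ℝ) w := by
          show (0:ℝ) ≤ if _ ∈ Wset (x, !bb) then (1:ℝ) else 0
          split <;> norm_num
        linarith
      · rw [if_neg hw]
        have hmem : g⁻¹ • w ∈ Wset (x, !bb) := by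
          rw [smul_eq_mul, hg, mk_singleton_inv]
          exact mem_shift_Wset x bb w hw
        have : lshift g ((ind (Wset (x, !bb))) : Lam → ℝ) w = 1 := by
          show (if g⁻¹ • w ∈ Wset (x, !bb) then (1:ℝ) else 0) = 1
          rw [if_pos hmem]
        rw [this]
        norm_num
    have h1 : ν one' ≤ ν (ind (Wset (x, bb)) + B) := by
      apply mono
      intro w
      exact hsum w
    rw [map_add] at h1
    rw [M.norm_one] at h1
    rw [hinv] at h1
    linarith
  -- disjointness
  have disj : ν (ind (Wset (ULift.up true, true)) + ind (Wset (ULift.up true, false)) + ind (Wset (ULift.up false, true))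
      + ind (Wset (ULift.up false, false))) ≤ 1 := by
    have hle : ∀ w : Lam,
        ((ind (Wset (ULift.up true, true)) + ind (Wset (ULift.up true, false)) + ind (Wset (ULift.up false, true))
          + ind (Wset (ULift.up false, false)) : BddFns Lam) : Lam → ℝ) w ≤ (one' : Lam → ℝ) w := by
      intro w
      have hcoe : ((ind (Wset (ULift.up true, true)) + ind (Wset (ULift.up true, false)) + ind (Wset (ULift.up false, true))
          + ind (Wset (ULift.up false, false)) : BddFns Lam) : Lam → ℝ) w
          = (if w ∈ Wset (ULift.up true, true) then (1:ℝ) else 0)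
            + (if w ∈ Wset (ULift.up true, false) then (1:ℝ) else 0)
            + (if w ∈ Wset (ULift.up false, true) then (1:ℝ) else 0)
            + (if w ∈ Wset (ULift.up false, false) then (1:ℝ) else 0) := rfl
      rw [hcoe]
      show _ ≤ (1:ℝ)
      rcases hh : w.toWord.head? with _ | ⟨a, b⟩
      · simp [Wset, hh]
      · obtain ⟨a⟩ := a
        cases a <;> cases b <;> simp [Wset, hh]
    calc ν _ ≤ ν one' := mono _ _ hle
      _ = 1 := M.norm_one
  rw [map_add, map_add, map_add] at disj
  have p1 := pair (ULift.up true) true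
  have p2 := pair (ULift.up false) true
  simp only [Bool.not_true] at p1 p2
  linarith [αnonneg (ULift.up true, true), αnonneg (ULift.up true, false),
    αnonneg (ULift.up false, true), αnonneg (ULift.up false, false)]

end FreeGroupParadox

section Transfer

/-- Transfer an invariant mean along an equivariant map. -/
noncomputable def invariantMeanTransfer {Γ X Δ : Type*} [Group Γ] [Group Δ] [MulAction Γ X]
    (ι : Δ →* Γ) (θ : X → Δ) (hθ : ∀ (w : Δ) (x : X), θ (ι w • x) = w * θ x)
    (M : InvariantMean Γ X) : InvariantMean Δ Δ := by
  have compmem : ∀ f : BddFns Δ, ((f : Δ → ℝ) ∘ θ) ∈ BddFns X := by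
    rintro ⟨f, C, hC⟩
    exact ⟨C, fun x => hC (θ x)⟩
  refine
    { toFun :=
        { toFun := fun f => M.toFun ⟨(f : Δ → ℝ) ∘ θ, compmem f⟩
          map_add' := by
            intro f g
            rw [← map_add]
            rfl
          map_smul' := by
            intro c f
            rw [← map_smul]
            rfl }
      norm_one := ?_
      nonneg := ?_
      invariant := ?_ }
  · exact M.norm_one
  · intro f hf
    exact M.nonneg _ fun x => hf (θ x)
  · intro g f
    show M.toFun _ = M.toFun _
    have hfun : (lshift g (f : Δ → ℝ)) ∘ θ = lshift (ι g) ((f : Δ → ℝ) ∘ θ) := by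
      funext x
      show (f : Δ → ℝ) (g⁻¹ • θ x) = (f : Δ → ℝ) (θ ((ι g)⁻¹ • x))
      rw [← map_inv ι, hθ g⁻¹ x, smul_eq_mul]
    have := M.invariant (ι g) ⟨(f : Δ → ℝ) ∘ θ, compmem f⟩
    calc M.toFun ⟨(lshift g (f : Δ → ℝ)) ∘ θ, _⟩
        = M.toFun ⟨lshift (ι g) ((f : Δ → ℝ) ∘ θ), lshift_mem (ι g) (compmem f)⟩ := by
          congr 1
          exact Subtype.ext hfun
      _ = M.toFun ⟨(f : Δ → ℝ) ∘ θ, compmem f⟩ := this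

end Transfer

section FreeAction

/-- From a free action, an equivariant projection to the acting group. -/
lemma exists_equivariant_proj {Γ X Δ : Type*} [Group Γ] [Group Δ] [MulAction Γ X]
    (ι : Δ →* Γ) (hfree : ∀ (x : X) (w : Δ), ι w • x = x → w = 1) :
    ∃ θ : X → Δ, ∀ (w : Δ) (x : X), θ (ι w • x) = w * θ x := by
  classical
  let s : Setoid X :=
    ⟨fun x y => ∃ w : Δ, ι w • x = y, by
      constructor
      · intro x; exact ⟨1, by simp⟩
      · rintro x y ⟨w, rfl⟩
        exact ⟨w⁻¹, by rw [map_inv, inv_smul_smul]⟩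
      · rintro x y z ⟨w, rfl⟩ ⟨w', rfl⟩
        exact ⟨w' * w, by rw [map_mul, mul_smul]⟩⟩
  have hrel : ∀ x : X, ∃ w : Δ, ι w • (Quotient.mk s x).out = x := fun x =>
    Quotient.mk_out (s := s) x
  let θ : X → Δ := fun x => Classical.choose (hrel x)
  have hθspec : ∀ x : X, ι (θ x) • (Quotient.mk s x).out = x := fun x =>
    Classical.choose_spec (hrel x)
  have huniq : ∀ (y : X) (u v : Δ), ι u • y = ι v • y → u = v := by
    intro y u v h
    have : ι (v⁻¹ * u) • y = y := by
      rw [map_mul, mul_smul, map_inv]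
      rw [h, inv_smul_smul]
    have := hfree y _ this
    rw [inv_mul_eq_one] at this
    exact this.symm
  refine ⟨θ, fun w x => ?_⟩
  have hmkeq : (Quotient.mk s (ι w • x)) = Quotient.mk s x := by
    apply Quotient.sound
    exact ⟨w⁻¹, by rw [map_inv, inv_smul_smul]⟩
  apply huniq ((Quotient.mk s x).out)
  have h1 : ι (θ (ι w • x)) • (Quotient.mk s x).out = ι w • x := by
    have := hθspec (ι w • x)
    rwa [hmkeq] at this
  rw [h1, map_mul, mul_smul, hθspec x]

end FreeAction

section Embedding

open SemidirectProduct

lemma mulSingle_mem_Nsub (w : Lam) : Pi.mulSingle (0 : ℤ) w ∈ Nsub := by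
  apply Set.Finite.subset (Set.finite_singleton (0 : ℤ))
  exact Pi.mulSupport_mulSingle_subset

/-- `F₂` as the coordinate-zero subgroup of `Nsub`. -/
def lamToNsub : Lam →* Nsub where
  toFun w := ⟨Pi.mulSingle (0 : ℤ) w, mulSingle_mem_Nsub w⟩
  map_one' := Subtype.ext (Pi.mulSingle_one (0 : ℤ))
  map_mul' w w' := by
    ext i
    show (Pi.mulSingle (0:ℤ) (w * w') : ℤ → Lam) i
      = ((Pi.mulSingle (0:ℤ) w : ℤ → Lam) * (Pi.mulSingle (0:ℤ) w' : ℤ → Lam)) i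
    rw [Pi.mulSingle_mul]

lemma inl_lamToNsub_mem_Hsub (w : Lam) : (inl (lamToNsub w) : GG) ∈ Hsub := by
  show rightHom (inl (lamToNsub w) : GG) = 1
  simp

@[simp] lemma lamToNsub_coe (w : Lam) :
    ((lamToNsub w : Nsub) : ℤ → Lam) = Pi.mulSingle (0:ℤ) w := rfl

/-- The embedding of `F₂` into the base group `Hsub`. -/
def iota : Lam →* Hsub :=
  ((inl : Nsub →* GG).comp lamToNsub).codRestrict Hsub inl_lamToNsub_mem_Hsub

lemma iota_coe (w : Lam) : ((iota w : Hsub) : GG) = inl (lamToNsub w) := rfl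

lemma iota_free : ∀ (x : Hsub ⧸ Ksub.subgroupOf Hsub) (w : Lam),
    iota w • x = x → w = 1 := by
  intro x w
  induction x using QuotientGroup.induction_on with
  | H h =>
    intro heq
    rw [MulAction.Quotient.smul_mk, QuotientGroup.eq, smul_eq_mul] at heq
    rw [Subgroup.mem_subgroupOf] at heq
    have hcond := heq.2
    -- underlying GG element
    have hhr : (h : GG).right = 1 := h.2
    set a : GG := (h : GG) with ha
    have hcoe : ((((iota w * h)⁻¹ * h : Hsub)) : GG) = (inl (lamToNsub w) * a)⁻¹ * a := by
      push_cast [iota_coe]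
      rfl
    rw [hcoe] at hcond
    have hleft : (((inl (lamToNsub w) * a)⁻¹ * a : GG).left : ℤ → Lam) (0 : ℤ)
        = ((a.left : ℤ → Lam) 0)⁻¹ * (((lamToNsub w : Nsub) : ℤ → Lam) 0)⁻¹
          * (a.left : ℤ → Lam) 0 := by
      simp only [SemidirectProduct.mul_left, SemidirectProduct.mul_right,
        SemidirectProduct.inv_left, SemidirectProduct.inv_right,
        SemidirectProduct.left_inl, SemidirectProduct.right_inl]
      rw [hhr]
      simp only [one_mul, mul_one, inv_one, map_one shiftHom]
      show (((lamToNsub w * a.left)⁻¹ * a.left : Nsub) : ℤ → Lam) 0 = _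
      simp only [Subgroup.coe_mul, Subgroup.coe_inv, Pi.mul_apply, Pi.inv_apply, mul_inv_rev]
    have h0 := hcond 0 le_rfl
    rw [hleft] at h0
    have hw0 : ((lamToNsub w : Nsub) : ℤ → Lam) 0 = w := by
      rw [lamToNsub_coe, Pi.mulSingle_eq_same]
    rw [hw0] at h0
    set c : Lam := (a.left : ℤ → Lam) 0
    have : w⁻¹ = 1 := by
      have := congrArg (fun z => c * z * c⁻¹) h0
      simpa [mul_assoc] using this
    rwa [inv_eq_one] at this

lemma Hsub_quot_no_mean :
    ¬ Nonempty (InvariantMean Hsub (Hsub ⧸ Ksub.subgroupOf Hsub)) := by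
  rintro ⟨M⟩
  obtain ⟨θ, hθ⟩ := exists_equivariant_proj iota iota_free
  exact no_invariant_mean_freegroup ⟨invariantMeanTransfer iota θ hθ M⟩

end Embedding

/-- There are triples `K ⊴ H ⊴ G` with `K` co-amenable in `G` but not in `H`. -/
theorem exists_coamenable_not_hereditary :
    ∃ (G : GrpCat) (H K : Subgroup G), H.Normal ∧ K ≤ H ∧ (K.subgroupOf H).Normal ∧
      K.Coamenable ∧ ¬ (K.subgroupOf H).Coamenable := by
  refine ⟨GrpCat.of GG, Hsub, Ksub, ?_, Ksub_le_Hsub, Ksub_subgroupOf_normal, ?_, ?_⟩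
  · exact MonoidHom.normal_ker _
  · exact Ksub_coamenable
  · exact Hsub_quot_no_mean
end

section
/- There exist a group G and subgroups K ≤ H₀ ≤ G, with all three groups G, H₀, K finitely generated, such that K is co-amenable in G but K is not co-amenable in H₀. -/
namespace MPX
open FreeGroup Filter Topology

abbrev F2 := FreeGroup (Fin 2)
abbrev F4 := FreeGroup (Fin 4)
abbrev FZ := FreeGroup ℤ

/-! ### The injective endomorphism φ of F₄ -/

noncomputable def Φ : F4 →* F2 :=
  FreeGroup.lift (fun i => (of 0 ^ (i : ℕ))⁻¹ * of 1 * of 0 ^ (i : ℕ))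

noncomputable def ι : F2 →* F4 := FreeGroup.lift ![of 2, of 3]

noncomputable def ρ : F4 →* F2 := FreeGroup.lift ![1, 1, of 0, of 1]

noncomputable def φ : F4 →* F4 := ι.comp Φ

noncomputable def π : F4 →* F2 := FreeGroup.lift ![of 0, of 1, 1, 1]

noncomputable def σ : F2 →* F4 := FreeGroup.lift ![of 0, of 1]

lemma ι_inj : Function.Injective ι := by
  have h : ρ.comp ι = MonoidHom.id F2 := by
    apply FreeGroup.ext_hom
    intro a
    fin_cases a <;> simp [ι, ρ] <;> rfl
  intro a b hab
  have : ∀ u, ρ (ι u) = u := fun u => by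
    rw [← MonoidHom.comp_apply, h, MonoidHom.id_apply]
  rw [← this a, ← this b, hab]

lemma π_surj : Function.Surjective π := by
  have h : ∀ u, π (σ u) = u := fun u => by
    have h2 : π.comp σ = MonoidHom.id F2 := by
      apply FreeGroup.ext_hom
      intro a
      fin_cases a <;> simp [π, σ] <;> rfl
    rw [← MonoidHom.comp_apply, h2, MonoidHom.id_apply]
  exact fun y => ⟨σ y, h y⟩

lemma π_φ (u : F4) : π (φ u) = 1 := by
  have h : π.comp ι = (1 : F2 →* F2) := by
    apply FreeGroup.ext_hom
    intro a
    fin_cases a <;> simp [π, ι] <;> rfl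
  show π (ι (Φ u)) = 1
  rw [← MonoidHom.comp_apply, h, MonoidHom.one_apply]

/-! ### Injectivity of Φ via a permutation action -/

def PP : Equiv.Perm (FZ × ℤ) where
  toFun x := (x.1, x.2 + 1)
  invFun x := (x.1, x.2 - 1)
  left_inv x := by simp
  right_inv x := by simp

def QQ : Equiv.Perm (FZ × ℤ) where
  toFun x := (FreeGroup.of x.2 * x.1, x.2)
  invFun x := ((FreeGroup.of x.2)⁻¹ * x.1, x.2)
  left_inv x := by simp
  right_inv x := by simp

noncomputable def act : F2 →* Equiv.Perm (FZ × ℤ) := FreeGroup.lift ![PP, QQ]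

lemma PP_pow (m : ℕ) (w : FZ) (n : ℤ) : (PP ^ m) (w, n) = (w, n + m) := by
  induction m with
  | zero => simp [Prod.ext_iff]
  | succ m ih =>
    rw [pow_succ']
    show PP ((PP ^ m) (w, n)) = _
    rw [ih]
    show (w, n + m + 1) = (w, n + (m + 1))
    simp [Prod.ext_iff]
    push_cast
    ring

lemma PP_pow_inv (m : ℕ) (w : FZ) (n : ℤ) : ((PP ^ m)⁻¹) (w, n) = (w, n - m) := by
  apply (PP ^ m).injective
  rw [Equiv.Perm.inv_def, Equiv.apply_symm_apply, PP_pow]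
  simp

noncomputable def γ : F4 →* FZ := FreeGroup.lift (fun i => FreeGroup.of ((i : ℕ) : ℤ))

lemma γ_inj : Function.Injective γ := by
  classical
  set δ : FZ →* F4 :=
    FreeGroup.lift (fun n : ℤ => if h : 0 ≤ n ∧ n < 4 then of (⟨n.toNat, by omega⟩ : Fin 4) else 1)
    with hδ
  have h : δ.comp γ = MonoidHom.id F4 := by
    apply FreeGroup.ext_hom
    intro a
    have ha : (0 : ℤ) ≤ ((a : ℕ) : ℤ) ∧ ((a : ℕ) : ℤ) < 4 := by
      constructor
      · positivity
      · exact_mod_cast a.2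
    simp only [MonoidHom.comp_apply, γ, FreeGroup.lift_apply_of, hδ, MonoidHom.id_apply]
    rw [dif_pos ha]
    congr 1
  intro a b hab
  have hp : ∀ u, δ (γ u) = u := fun u => by
    rw [← MonoidHom.comp_apply, h, MonoidHom.id_apply]
  rw [← hp a, ← hp b, hab]

lemma act_Φ_key : ∀ u : F4, ∀ w : FZ, (act (Φ u)) (w, 0) = (γ u * w, 0) := by
  intro u
  refine FreeGroup.induction_on u ?_ ?_ ?_ ?_
  · intro w; simp
  · intro i w
    show (act (Φ (of i))) (w, 0) = (γ (of i) * w, 0)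
    rw [Φ, FreeGroup.lift_apply_of, γ, FreeGroup.lift_apply_of]
    rw [_root_.map_mul, _root_.map_mul, _root_.map_inv, _root_.map_pow]
    have hact0 : act (of 0) = PP := by rw [act, FreeGroup.lift_apply_of]; rfl
    have hact1 : act (of 1) = QQ := by rw [act, FreeGroup.lift_apply_of]; rfl
    rw [hact0, hact1]
    show ((PP ^ (i:ℕ))⁻¹) (QQ ((PP ^ (i:ℕ)) (w, 0))) = _
    rw [PP_pow]
    show ((PP ^ (i:ℕ))⁻¹) (FreeGroup.of ((0:ℤ) + (i:ℕ)) * w, (0:ℤ) + (i:ℕ)) = _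
    rw [PP_pow_inv]
    simp
  · intro i ih
    intro w
    have ih' : ∀ w : FZ, (act (Φ (of i))) (w, 0) = (γ (of i) * w, 0) := ih
    show (act (Φ ((of i)⁻¹))) (w, 0) = (γ ((of i)⁻¹) * w, 0)
    rw [_root_.map_inv, _root_.map_inv]
    set a := act (Φ (of i)) with ha
    have h1 : a ((γ (of i))⁻¹ * w, 0) = (w, 0) := by
      rw [ih' ((γ (of i))⁻¹ * w)]
      simp
    calc a⁻¹ (w, 0) = a⁻¹ (a ((γ (of i))⁻¹ * w, 0)) := by rw [h1]
    _ = ((γ (of i))⁻¹ * w, 0) := by rw [Equiv.Perm.inv_def, Equiv.symm_apply_apply]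
    _ = ((γ ((of i)⁻¹)) * w, 0) := by rw [_root_.map_inv]
  · intro x y ihx ihy
    intro w
    rw [_root_.map_mul, _root_.map_mul]
    show (act (Φ x)) ((act (Φ y)) (w, 0)) = _
    rw [ihy, ihx, _root_.map_mul, mul_assoc]

lemma Φ_inj : Function.Injective Φ := by
  rw [injective_iff_map_eq_one]
  intro u hu
  have h := act_Φ_key u 1
  rw [hu, _root_.map_one] at h
  rw [Equiv.Perm.one_apply] at h
  have h2 : ((1 : FZ), (0:ℤ)) = (γ u * 1, 0) := h
  have h3 : γ u = 1 := by
    have := (Prod.ext_iff.1 h2).1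
    simpa using this.symm
  have := γ_inj (a₁ := u) (a₂ := 1) (by simpa using h3)
  simpa using this

lemma φ_inj : Function.Injective φ := fun a b hab => Φ_inj (ι_inj hab)




noncomputable def U : Ultrafilter ℕ := Ultrafilter.of Filter.cofinite

lemma U_le_atTop : (U : Filter ℕ) ≤ atTop := by
  rw [← Nat.cofinite_eq_atTop]; exact Ultrafilter.of_le _

def Bdd (u : ℕ → ℝ) : Prop := ∃ C : ℝ, ∀ n, |u n| ≤ C

noncomputable def ulim (u : ℕ → ℝ) : ℝ := limUnder (U : Filter ℕ) u

lemma exists_tendsto_U {u : ℕ → ℝ} (h : Bdd u) : ∃ l, Tendsto u (U : Filter ℕ) (𝓝 l) := by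
  obtain ⟨C, hC⟩ := h
  have hle : (U.map u : Filter ℝ) ≤ Filter.principal (Set.Icc (-C) C) := by
    rw [le_principal_iff]
    have : ∀ n, u n ∈ Set.Icc (-C) C := fun n => abs_le.1 (hC n)
    exact Filter.mem_map.2 (Filter.univ_mem' this)
  obtain ⟨l, _, hl⟩ := (isCompact_Icc (a := -C) (b := C)).ultrafilter_le_nhds (U.map u) hle
  exact ⟨l, by rwa [Filter.Tendsto, ← Ultrafilter.coe_map]⟩

lemma tendsto_ulim {u : ℕ → ℝ} (h : Bdd u) : Tendsto u (U : Filter ℕ) (𝓝 (ulim u)) :=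
  tendsto_nhds_limUnder (exists_tendsto_U h)

lemma ulim_eq {u : ℕ → ℝ} {l : ℝ} (h : Tendsto u (U : Filter ℕ) (𝓝 l)) : ulim u = l :=
  h.limUnder_eq

lemma ulim_add {u v : ℕ → ℝ} (hu : Bdd u) (hv : Bdd v) : ulim (u + v) = ulim u + ulim v :=
  ulim_eq ((tendsto_ulim hu).add (tendsto_ulim hv))

lemma ulim_smul {u : ℕ → ℝ} (c : ℝ) (hu : Bdd u) : ulim (fun n => c * u n) = c * ulim u :=
  ulim_eq (((tendsto_ulim hu).const_mul c))

lemma ulim_nonneg {u : ℕ → ℝ} (hu : Bdd u) (h : ∀ n, 0 ≤ u n) : 0 ≤ ulim u :=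
  ge_of_tendsto (tendsto_ulim hu) (Filter.Eventually.of_forall h)

lemma ulim_eventually_one {u : ℕ → ℝ} (h : ∀ᶠ n in atTop, u n = 1) : ulim u = 1 := by
  apply ulim_eq
  have h' : ∀ᶠ n in (U : Filter ℕ), u n = 1 := h.filter_mono U_le_atTop
  exact Tendsto.congr' (Filter.EventuallyEq.symm h') tendsto_const_nhds

lemma ulim_eq_of_sub {u v : ℕ → ℝ} (hu : Bdd u) (hv : Bdd v)
    (h : Tendsto (fun n => u n - v n) atTop (𝓝 0)) : ulim u = ulim v := by
  have h2 : Tendsto (fun n => u n - v n) (U : Filter ℕ) (𝓝 0) := h.mono_left U_le_atTop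
  have h3 : Tendsto u (U : Filter ℕ) (𝓝 (0 + ulim v)) := by
    have := h2.add (tendsto_ulim hv)
    simpa using this
  rw [ulim_eq h3, zero_add]

section Mean

variable {Γ : Type*} [Group Γ] {X : Type*} [MulAction Γ X]

noncomputable def uavg (p : ℕ → X) (f : X → ℝ) (n : ℕ) : ℝ :=
  (∑ k ∈ Finset.range n, f (p (k + 1))) / n

lemma uavg_bdd (p : ℕ → X) {f : X → ℝ} {C : ℝ} (hC : ∀ x, |f x| ≤ C) (n : ℕ) :
    |uavg p f n| ≤ |C| := by
  rcases Nat.eq_zero_or_pos n with h | h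
  · subst h; simp [uavg, abs_nonneg]
  have h1 : |∑ k ∈ Finset.range n, f (p (k + 1))| ≤ n * |C| := by
    calc |∑ k ∈ Finset.range n, f (p (k + 1))| ≤ ∑ k ∈ Finset.range n, |f (p (k + 1))| :=
        Finset.abs_sum_le_sum_abs _ _
    _ ≤ ∑ _k ∈ Finset.range n, |C| :=
        Finset.sum_le_sum (fun k _ => (hC _).trans (le_abs_self C))
    _ = n * |C| := by simp [mul_comm]
  rw [uavg, abs_div, abs_of_nonneg (by positivity : (0:ℝ) ≤ (n:ℝ))]
  rw [div_le_iff₀ (by exact_mod_cast h)]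
  calc |∑ k ∈ Finset.range n, f (p (k + 1))| ≤ n * |C| := h1
  _ = |C| * n := mul_comm _ _

lemma uavg_bdd' (p : ℕ → X) {f : X → ℝ} (hf : ∃ C, ∀ x, |f x| ≤ C) : Bdd (uavg p f) := by
  obtain ⟨C, hC⟩ := hf
  exact ⟨|C|, uavg_bdd p hC⟩

theorem mean_exists (p : ℕ → X) (S0 : Set Γ) (t : Γ)
    (hS : ∀ g : Γ, g ∈ Subgroup.closure (S0 ∪ {t}))
    (h1 : ∀ g ∈ S0, ∀ k : ℕ, g⁻¹ • p (k + 1) = p (k + 1))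
    (h2 : ∀ k, t⁻¹ • p k = p (k + 1)) :
    Nonempty (InvariantMean Γ X) := by
  classical
  have madd : ∀ f g : BddFns X,
      uavg p ((f : X → ℝ) + (g : X → ℝ)) = uavg p (f : X → ℝ) + uavg p (g : X → ℝ) := by
    intro f g
    funext n
    simp [uavg, Finset.sum_add_distrib, add_div]
  set m : BddFns X →ₗ[ℝ] ℝ :=
    { toFun := fun f => ulim (uavg p (f : X → ℝ))
      map_add' := by
        intro f g
        show ulim (uavg p ((↑(f + g)) : X → ℝ)) = ulim (uavg p (f : X → ℝ)) + ulim (uavg p (g : X → ℝ))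
        rw [show ((↑(f + g)) : X → ℝ) = (f : X → ℝ) + (g : X → ℝ) from rfl, madd f g]
        exact ulim_add (uavg_bdd' p f.2) (uavg_bdd' p g.2)
      map_smul' := by
        intro c f
        show ulim (uavg p ((↑(c • f)) : X → ℝ)) = c * ulim (uavg p (f : X → ℝ))
        have hcf : uavg p ((↑(c • f)) : X → ℝ) = fun n => c * uavg p (f : X → ℝ) n := by
          funext n
          show (∑ k ∈ Finset.range n, c * (f : X → ℝ) (p (k+1))) / n = _
          rw [← Finset.mul_sum, mul_div_assoc]
          rfl
        rw [hcf]
        exact ulim_smul c (uavg_bdd' p f.2) } with hm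
  have mval : ∀ f : BddFns X, m f = ulim (uavg p (f : X → ℝ)) := fun f => rfl
  have minv : ∀ g : Γ, g ∈ Subgroup.closure (S0 ∪ {t}) →
      ∀ f : BddFns X, m ⟨lshift g (f : X → ℝ), lshift_mem g f.2⟩ = m f := by
    intro g hg
    induction hg using Subgroup.closure_induction with
    | mem x hx =>
      intro f
      rw [mval, mval]
      rcases hx with hx | hx
      · -- x ∈ S0 : exact invariance
        have heq : uavg p (lshift x (f : X → ℝ)) = uavg p (f : X → ℝ) := by
          funext n
          unfold uavg
          congr 1
          refine Finset.sum_congr rfl (fun k _ => ?_)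
          show (f : X → ℝ) (x⁻¹ • p (k+1)) = (f : X → ℝ) (p (k+1))
          rw [h1 x hx k]
        rw [heq]
      · -- x = t : Følner shift
        rcases hx with rfl
        obtain ⟨C, hC⟩ := f.2
        have hC0 : 0 ≤ C := le_trans (abs_nonneg _) (hC (p 1))
        apply ulim_eq_of_sub (uavg_bdd' p ⟨C, fun y => hC _⟩) (uavg_bdd' p ⟨C, hC⟩)
        have hdiff : ∀ n : ℕ, uavg p (lshift x (f : X → ℝ)) n - uavg p (f : X → ℝ) n
            = (((f : X → ℝ) (p (n+1))) - ((f : X → ℝ) (p 1))) / n := by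
          intro n
          unfold uavg
          rw [div_sub_div_same]
          congr 1
          have hsh : ∀ k : ℕ, lshift x (f : X → ℝ) (p (k+1)) = (f : X → ℝ) (p (k+2)) := by
            intro k
            show (f : X → ℝ) (x⁻¹ • p (k+1)) = _
            rw [h2 (k+1)]
          calc (∑ k ∈ Finset.range n, lshift x (f : X → ℝ) (p (k+1)))
              - ∑ k ∈ Finset.range n, (f : X → ℝ) (p (k+1))
              = ∑ k ∈ Finset.range n,
                ((f : X → ℝ) (p (k+1+1)) - (f : X → ℝ) (p (k+1))) := by
                rw [Finset.sum_sub_distrib]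
                congr 1
                exact Finset.sum_congr rfl (fun k _ => hsh k)
          _ = (f : X → ℝ) (p (n+1)) - (f : X → ℝ) (p 1) :=
                Finset.sum_range_sub (fun k => (f : X → ℝ) (p (k+1))) n
        apply squeeze_zero_norm (a := fun n : ℕ => (2*C)/n)
        · intro n
          rw [Real.norm_eq_abs]
          show |uavg p (lshift x (f : X → ℝ)) n - uavg p (f : X → ℝ) n| ≤ 2*C/n
          rw [hdiff n]
          rcases Nat.eq_zero_or_pos n with h | h
          · subst h; simp
          · have h2C : |((f : X → ℝ) (p (n+1))) - ((f : X → ℝ) (p 1))| ≤ 2*C := by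
              calc |((f : X → ℝ) (p (n+1))) - ((f : X → ℝ) (p 1))|
                  ≤ |((f : X → ℝ) (p (n+1)))| + |((f : X → ℝ) (p 1))| := abs_sub _ _
              _ ≤ C + C := add_le_add (hC _) (hC _)
              _ = 2*C := by ring
            rw [abs_div, abs_of_nonneg (by positivity : (0:ℝ) ≤ (n:ℝ))]
            gcongr
        · exact tendsto_const_div_atTop_nhds_zero_nat (2*C)
    | one =>
      intro f
      have h0 : lshift (1:Γ) (f : X → ℝ) = (f : X → ℝ) := by
        funext y; simp [lshift]
      exact congrArg m (Subtype.ext h0)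
    | mul a b _ _ iha ihb =>
      intro f
      have hab : lshift (a * b) (f : X → ℝ) = lshift a (lshift b (f : X → ℝ)) := by
        funext y; simp [lshift, mul_smul]
      have step1 : m ⟨lshift (a*b) (f : X → ℝ), lshift_mem _ f.2⟩
          = m ⟨lshift a (lshift b (f : X → ℝ)), lshift_mem a (lshift_mem b f.2)⟩ :=
        congrArg m (Subtype.ext hab)
      rw [step1, iha ⟨lshift b (f : X → ℝ), lshift_mem b f.2⟩]
      exact ihb f
    | inv a ha iha =>
      intro f
      have key := iha ⟨lshift a⁻¹ (f : X → ℝ), lshift_mem a⁻¹ f.2⟩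
      have hcan : lshift a (lshift a⁻¹ (f : X → ℝ)) = (f : X → ℝ) := by
        funext y; simp [lshift, mul_smul]
      rw [show (⟨lshift a (lshift a⁻¹ (f : X → ℝ)), lshift_mem a (lshift_mem a⁻¹ f.2)⟩ : BddFns X)
          = f from Subtype.ext hcan] at key
      exact key.symm
  refine ⟨⟨m, ?_, ?_, ?_⟩⟩
  · -- norm_one
    rw [mval]
    apply ulim_eventually_one
    filter_upwards [eventually_ge_atTop 1] with n hn
    show (∑ _k ∈ Finset.range n, (1:ℝ)) / n = 1
    rw [Finset.sum_const, Finset.card_range]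
    simp only [nsmul_eq_mul, mul_one]
    rw [div_self]
    exact_mod_cast Nat.one_le_iff_ne_zero.mp hn
  · -- nonneg
    intro f hf
    rw [mval]
    apply ulim_nonneg (uavg_bdd' p f.2)
    intro n
    apply div_nonneg _ (by positivity)
    exact Finset.sum_nonneg fun k _ => hf _
  · intro g f
    exact minv g (hS g) f

end Mean

/-! ### Iterates of φ -/

noncomputable def φiter : ℕ → (F4 →* F4)
  | 0 => MonoidHom.id _
  | (n+1) => φ.comp (φiter n)

lemma φiter_zero (x : F4) : φiter 0 x = x := rfl

lemma φiter_succ (n : ℕ) (x : F4) : φiter (n+1) x = φ (φiter n x) := rfl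

lemma φiter_comm (n : ℕ) (x : F4) : φ (φiter n x) = φiter n (φ x) := by
  induction n with
  | zero => rfl
  | succ n ih => rw [φiter_succ, φiter_succ, ih]

lemma φiter_add (a b : ℕ) (x : F4) : φiter (a + b) x = φiter a (φiter b x) := by
  induction a with
  | zero => simp [φiter_zero]
  | succ a ih =>
    have : a + 1 + b = (a + b) + 1 := by omega
    rw [this, φiter_succ, ih, φiter_succ]

lemma φiter_inj (n : ℕ) : Function.Injective (φiter n) := by
  induction n with
  | zero => exact fun a b h => h
  | succ n ih =>
    intro a b h
    rw [φiter_succ, φiter_succ] at h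
    exact ih (φ_inj h)

lemma φiter_swap (a b : ℕ) (x : F4) : φiter a (φiter b x) = φiter b (φiter a x) := by
  rw [← φiter_add, add_comm, φiter_add]

/-! ### The telescope space Ω -/

universe u

def ωrel (x y : ULift.{u} (ℕ × F4)) : Prop :=
  φiter y.down.1 x.down.2 = φiter x.down.1 y.down.2

lemma ωrel_equiv : Equivalence (ωrel.{u}) := by
  constructor
  · intro x; rfl
  · intro x y h; exact h.symm
  · rintro ⟨⟨k, h⟩⟩ ⟨⟨l, h'⟩⟩ ⟨⟨m, h''⟩⟩ hxy hyz
    show φiter m h = φiter k h''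
    apply φiter_inj l
    calc φiter l (φiter m h) = φiter m (φiter l h) := φiter_swap _ _ _
    _ = φiter m (φiter k h') := by rw [show φiter l h = φiter k h' from hxy]
    _ = φiter k (φiter m h') := φiter_swap _ _ _
    _ = φiter k (φiter l h'') := by rw [show φiter m h' = φiter l h'' from hyz]
    _ = φiter l (φiter k h'') := φiter_swap _ _ _

instance ωSetoid : Setoid (ULift.{u} (ℕ × F4)) := ⟨ωrel, ωrel_equiv⟩

def Ω : Type u := Quotient ωSetoid.{u}

def ωmk (k : ℕ) (h : F4) : Ω.{u} := ⟦ULift.up (k, h)⟧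

lemma ωrel_iff (x y : ULift.{u} (ℕ × F4)) :
    x ≈ y ↔ φiter y.down.1 x.down.2 = φiter x.down.1 y.down.2 := Iff.rfl

/-! ### The action of F4 on Ω and the shift T -/

noncomputable def actF (g : F4) : ULift.{u} (ℕ × F4) → Ω.{u} :=
  fun x => ωmk x.down.1 (φiter x.down.1 g * x.down.2)

lemma actF_resp (g : F4) : ∀ x y : ULift.{u} (ℕ × F4), x ≈ y → actF g x = actF g y := by
  rintro ⟨⟨k, h⟩⟩ ⟨⟨l, h'⟩⟩ hxy
  rw [ωrel_iff] at hxy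
  apply Quotient.sound
  rw [ωrel_iff]
  show φiter l (φiter k g * h) = φiter k (φiter l g * h')
  rw [_root_.map_mul, _root_.map_mul, φiter_swap l k g,
    show φiter l h = φiter k h' from hxy]

noncomputable def actE (g : F4) : Equiv.Perm Ω.{u} where
  toFun := Quotient.lift (actF g) (actF_resp g)
  invFun := Quotient.lift (actF g⁻¹) (actF_resp g⁻¹)
  left_inv := by
    rintro ⟨⟨⟨k, h⟩⟩⟩
    show ωmk k (φiter k g⁻¹ * (φiter k g * h)) = ωmk k h
    rw [_root_.map_inv, inv_mul_cancel_left]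
  right_inv := by
    rintro ⟨⟨⟨k, h⟩⟩⟩
    show ωmk k (φiter k g * (φiter k g⁻¹ * h)) = ωmk k h
    rw [_root_.map_inv, mul_inv_cancel_left]

lemma actE_mk (g : F4) (k : ℕ) (h : F4) : actE g (ωmk k h) = ωmk k (φiter k g * h) := rfl

noncomputable def A : F4 →* Equiv.Perm Ω.{u} :=
  MonoidHom.mk' actE (by
    intro a b
    apply Equiv.ext
    rintro ⟨⟨⟨k, h⟩⟩⟩
    show actE (a * b) (ωmk k h) = actE a (actE b (ωmk k h))
    rw [actE_mk, actE_mk, actE_mk, _root_.map_mul, mul_assoc])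

lemma A_mk (g : F4) (k : ℕ) (h : F4) : A g (ωmk k h) = ωmk k (φiter k g * h) := rfl

noncomputable def T : Equiv.Perm Ω.{u} where
  toFun := Quotient.lift (fun x => ωmk x.down.1 (φ x.down.2)) (by
    rintro ⟨⟨k, h⟩⟩ ⟨⟨l, h'⟩⟩ hxy
    rw [ωrel_iff] at hxy
    apply Quotient.sound
    rw [ωrel_iff]
    show φiter l (φ h) = φiter k (φ h')
    rw [← φiter_comm, ← φiter_comm, show φiter l h = φiter k h' from hxy])
  invFun := Quotient.lift (fun x => ωmk (x.down.1 + 1) x.down.2) (by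
    rintro ⟨⟨k, h⟩⟩ ⟨⟨l, h'⟩⟩ hxy
    rw [ωrel_iff] at hxy
    apply Quotient.sound
    rw [ωrel_iff]
    show φiter (l+1) h = φiter (k+1) h'
    rw [φiter_succ, φiter_succ, show φiter l h = φiter k h' from hxy, φiter_comm])
  left_inv := by
    rintro ⟨⟨⟨k, h⟩⟩⟩
    show ωmk (k + 1) (φ h) = ωmk k h
    apply Quotient.sound
    rw [ωrel_iff]
    show φiter k (φ h) = φiter (k+1) h
    rw [φiter_succ, φiter_comm]
  right_inv := by
    rintro ⟨⟨⟨k, h⟩⟩⟩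
    show ωmk (k + 1) (φ h) = ωmk k h
    apply Quotient.sound
    rw [ωrel_iff]
    show φiter k (φ h) = φiter (k+1) h
    rw [φiter_succ, φiter_comm]

lemma T_mk (k : ℕ) (h : F4) : T (ωmk k h) = ωmk k (φ h) := rfl

lemma Tinv_mk (k : ℕ) (h : F4) : T⁻¹ (ωmk k h) = ωmk (k + 1) h := rfl

lemma TAT (g : F4) : T * A g * T⁻¹ = A (φ g) := by
  apply Equiv.ext
  rintro ⟨⟨⟨k, h⟩⟩⟩
  show T (A g (T⁻¹ (ωmk k h))) = A (φ g) (ωmk k h)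
  rw [Tinv_mk, A_mk, T_mk, A_mk]
  apply Quotient.sound
  rw [ωrel_iff]
  show φiter k (φ ((φiter (k+1)) g * h)) = φiter (k+1) ((φiter k) (φ g) * h)
  rw [_root_.map_mul, _root_.map_mul, _root_.map_mul]
  congr 1
  · rw [φiter_comm (k+1) g, φiter_swap]
  · rw [← φiter_comm, ← φiter_succ]

lemma A_inj : Function.Injective (A.{u}) := by
  rw [injective_iff_map_eq_one]
  intro g hg
  have h := congrFun (congrArg (fun (e : Equiv.Perm Ω.{u}) => (e : Ω.{u} → Ω.{u})) hg) (ωmk 0 1)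
  simp only [Equiv.Perm.coe_one, id_eq] at h
  rw [show (A g (ωmk 0 1) : Ω.{u}) = ωmk 0 (φiter 0 g * 1) from rfl] at h
  have h2 := Quotient.exact h
  rw [ωrel_iff] at h2
  have h3 : φiter 0 (φiter 0 g * 1) = φiter 0 1 := h2
  simpa [φiter_zero] using h3

/-! ### The ambient group and its subgroups -/

noncomputable def genS : Set (Equiv.Perm Ω) :=
  (Set.range fun i : Fin 4 => A (FreeGroup.of i)) ∪ {T}

noncomputable def Gsub : Subgroup (Equiv.Perm Ω) := Subgroup.closure genS

lemma A_mem_G (g : F4) : A g ∈ Gsub := by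
  refine FreeGroup.induction_on g ?_ ?_ ?_ ?_
  · rw [_root_.map_one]; exact one_mem _
  · intro i
    exact Subgroup.subset_closure (Or.inl ⟨i, rfl⟩)
  · intro i hi
    rw [_root_.map_inv]; exact inv_mem hi
  · intro x y hx hy
    rw [_root_.map_mul]; exact mul_mem hx hy

lemma T_mem_G : T ∈ Gsub := Subgroup.subset_closure (Or.inr rfl)

noncomputable def β : F4 →* ↥Gsub := A.codRestrict Gsub A_mem_G

lemma β_coe (g : F4) : (β g : Equiv.Perm Ω) = A g := rfl

lemma β_inj : Function.Injective β := fun a b hab => A_inj (congrArg Subtype.val hab)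

noncomputable def tG : ↥Gsub := ⟨T, T_mem_G⟩

lemma conjβ (u : F4) : tG * β u * tG⁻¹ = β (φ u) := by
  apply Subtype.ext
  show T * A u * T⁻¹ = A (φ u)
  exact TAT u

noncomputable def H0 : Subgroup ↥Gsub :=
  Subgroup.closure (Set.range fun i : Fin 4 => β (FreeGroup.of i))

noncomputable def KK : Subgroup ↥Gsub :=
  Subgroup.closure (Set.range fun i : Fin 4 => β (φ (FreeGroup.of i)))

lemma H0_eq_range : H0 = β.range := by
  rw [MonoidHom.range_eq_map, ← FreeGroup.closure_range_of (Fin 4), MonoidHom.map_closure]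
  unfold H0
  congr 1
  rw [← Set.range_comp]
  rfl

lemma βmem_H0 (u : F4) : β u ∈ H0 := by
  rw [H0_eq_range]; exact ⟨u, rfl⟩

lemma K_le_H0 : KK ≤ H0 := by
  rw [KK, Subgroup.closure_le]
  rintro x ⟨i, rfl⟩
  exact βmem_H0 _

def W4 : Subgroup F4 := Subgroup.closure (Set.range fun i : Fin 4 => φ (FreeGroup.of i))

lemma φ_mem_W (u : F4) : φ u ∈ W4 := by
  refine FreeGroup.induction_on u ?_ ?_ ?_ ?_
  · rw [_root_.map_one]; exact one_mem _
  · intro i; exact Subgroup.subset_closure ⟨i, rfl⟩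
  · intro i hi; rw [_root_.map_inv]; exact inv_mem hi
  · intro x y hx hy; rw [_root_.map_mul]; exact mul_mem hx hy

lemma βW_mem_K : ∀ u ∈ W4, β u ∈ KK := by
  intro u hu
  induction hu using Subgroup.closure_induction with
  | mem x hx =>
    obtain ⟨i, rfl⟩ := hx
    exact Subgroup.subset_closure ⟨i, rfl⟩
  | one => rw [_root_.map_one]; exact one_mem _
  | mul a b _ _ iha ihb => rw [_root_.map_mul]; exact mul_mem iha ihb
  | inv a _ iha => rw [_root_.map_inv]; exact inv_mem iha

lemma conj_pow : ∀ (k : ℕ) (u : F4), tG^k * β u * (tG^k)⁻¹ = β (φiter k u) := by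
  intro k
  induction k with
  | zero => intro u; simp [φiter_zero]
  | succ k ih =>
    intro u
    have h1 : tG^(k+1) * β u * (tG^(k+1))⁻¹ = tG^k * (tG * β u * tG⁻¹) * (tG^k)⁻¹ := by
      rw [pow_succ]
      group
    rw [h1, conjβ, ih (φ u)]
    congr 1
    rw [φiter_succ, φiter_comm]

lemma conj_pow_mem (k : ℕ) (i : Fin 4) :
    tG^(k+1) * β (FreeGroup.of i) * (tG^(k+1))⁻¹ ∈ KK := by
  rw [conj_pow]
  exact βW_mem_K _ (by rw [φiter_succ]; exact φ_mem_W _)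

/-! ### The Følner ray in G/K -/

noncomputable def pRay : ℕ → (↥Gsub ⧸ KK) := fun k => QuotientGroup.mk (tG⁻¹ ^ k)

lemma smul_pRay (g : ↥Gsub) (k : ℕ) : g • pRay k = QuotientGroup.mk (g * tG⁻¹ ^ k) := by
  show g • (QuotientGroup.mk (tG⁻¹ ^ k)) = _
  rw [MulAction.Quotient.smul_mk]
  rfl

lemma h2Ray (k : ℕ) : tG⁻¹ • pRay k = pRay (k+1) := by
  rw [smul_pRay]
  show QuotientGroup.mk (tG⁻¹ * tG⁻¹ ^ k) = QuotientGroup.mk (tG⁻¹ ^ (k+1))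
  rw [← pow_succ']

lemma h1Ray (i : Fin 4) (k : ℕ) : (β (FreeGroup.of i))⁻¹ • pRay (k+1) = pRay (k+1) := by
  rw [smul_pRay]
  show QuotientGroup.mk _ = QuotientGroup.mk _
  rw [QuotientGroup.eq]
  have heq : ((β (FreeGroup.of i))⁻¹ * tG⁻¹ ^ (k+1))⁻¹ * tG⁻¹ ^ (k+1)
      = tG^(k+1) * β (FreeGroup.of i) * (tG^(k+1))⁻¹ := by
    rw [inv_pow]
    group
  rw [heq]
  exact conj_pow_mem k i

lemma genTop : ∀ g : ↥Gsub,
    g ∈ Subgroup.closure ((Set.range fun i : Fin 4 => β (FreeGroup.of i)) ∪ {tG}) := by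
  intro g
  set C := Subgroup.closure ((Set.range fun i : Fin 4 => β (FreeGroup.of i)) ∪ {tG}) with hC
  have hle : Subgroup.closure genS ≤ Subgroup.map Gsub.subtype C := by
    rw [Subgroup.closure_le]
    intro x hx
    simp only [genS, Set.mem_union, Set.mem_range, Set.mem_singleton_iff] at hx
    rcases hx with ⟨i, rfl⟩ | rfl
    · exact ⟨β (FreeGroup.of i), Subgroup.subset_closure (Or.inl ⟨i, rfl⟩), rfl⟩
    · exact ⟨tG, Subgroup.subset_closure (Or.inr rfl), rfl⟩
  obtain ⟨y, hy, hyx⟩ := hle g.2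
  have hyg : y = g := Subtype.ext hyx
  rwa [← hyg]

lemma K_coamenable : KK.Coamenable := by
  apply mean_exists pRay (Set.range fun i : Fin 4 => β (FreeGroup.of i)) tG genTop
  · rintro g ⟨i, rfl⟩ k
    exact h1Ray i k
  · exact h2Ray

lemma FG_G : Group.FG ↥Gsub := by
  have : Finite ↑genS := ((Set.finite_range _).union (Set.finite_singleton T)).to_subtype
  exact Group.closure_finite_fg genS

lemma FG_H0 : Group.FG ↥H0 := by
  have : Finite ↑(Set.range fun i : Fin 4 => β (FreeGroup.of i)) :=
    (Set.finite_range _).to_subtype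
  exact Group.closure_finite_fg _

lemma FG_K : Group.FG ↥KK := by
  have : Finite ↑(Set.range fun i : Fin 4 => β (φ (FreeGroup.of i))) :=
    (Set.finite_range _).to_subtype
  exact Group.closure_finite_fg _

/-! ### Transporting a mean along a surjection killing K -/

theorem transport {H Q : Type*} [Group H] [Group Q] (ψ : H →* Q)
    (hsurj : Function.Surjective ψ) (K' : Subgroup H)
    (hker : ∀ x : H, x ∈ K' → ψ x = 1)
    (M : InvariantMean H (H ⧸ K')) : Nonempty (InvariantMean Q Q) := by
  classical
  have hresp : ∀ a b : H, (QuotientGroup.leftRel K') a b → ψ a = ψ b := by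
    intro a b hab
    rw [QuotientGroup.leftRel_apply] at hab
    have := hker _ hab
    rw [_root_.map_mul, _root_.map_inv] at this
    have h2 : ψ a * ((ψ a)⁻¹ * ψ b) = ψ a * 1 := by rw [this]
    rw [mul_inv_cancel_left, mul_one] at h2
    exact h2.symm
  set θ : H ⧸ K' → Q := fun x => Quotient.liftOn' x ψ hresp with hθ
  have θ_mk : ∀ h : H, θ (QuotientGroup.mk h) = ψ h := fun h => rfl
  have θ_smul : ∀ (g : H) (x : H ⧸ K'), θ (g • x) = ψ g * θ x := by
    intro g x
    induction x using Quotient.inductionOn' with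
    | h a =>
      have : (Quotient.mk'' a : H ⧸ K') = QuotientGroup.mk a := rfl
      rw [this, MulAction.Quotient.smul_mk, θ_mk, θ_mk]
      rw [smul_eq_mul, _root_.map_mul]
  have bddcomp : ∀ f : BddFns Q, (fun x => (f : Q → ℝ) (θ x)) ∈ BddFns (H ⧸ K') := by
    intro f
    obtain ⟨C, hC⟩ := f.2
    exact ⟨C, fun x => hC _⟩
  set m2 : BddFns Q →ₗ[ℝ] ℝ :=
    { toFun := fun f => M.toFun ⟨fun x => (f : Q → ℝ) (θ x), bddcomp f⟩
      map_add' := by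
        intro f g
        rw [← M.toFun.map_add]
        congr 1
      map_smul' := by
        intro c f
        rw [← M.toFun.map_smul]
        congr 1 } with hm2
  refine ⟨⟨m2, ?_, ?_, ?_⟩⟩
  · exact M.norm_one
  · intro f hf
    exact M.nonneg _ (fun x => hf _)
  · intro q f
    obtain ⟨g, rfl⟩ := hsurj q
    have base := M.invariant g ⟨fun x => (f : Q → ℝ) (θ x), bddcomp f⟩
    have key : (fun x => (lshift (ψ g) (f : Q → ℝ)) (θ x))
        = lshift g (fun x => (f : Q → ℝ) (θ x)) := by
      funext x
      show (f : Q → ℝ) ((ψ g)⁻¹ • θ x) = (f : Q → ℝ) (θ (g⁻¹ • x))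
      rw [θ_smul, _root_.map_inv, smul_eq_mul]
    show M.toFun _ = M.toFun _
    refine Eq.trans ?_ base
    exact congrArg M.toFun (Subtype.ext key)

/-! ### No invariant mean on F₂ -/

lemma head_lemma (i : Fin 2) (x : F2) (hx : x.toWord.head? ≠ some (i, true)) :
    ((FreeGroup.of i)⁻¹ * x).toWord = (i, false) :: x.toWord := by
  classical
  have h1 : (FreeGroup.of i)⁻¹ * x = FreeGroup.mk ((i, false) :: x.toWord) := by
    conv_lhs => rw [← FreeGroup.mk_toWord (x := x)]
    rw [show (FreeGroup.of i : F2) = FreeGroup.mk [(i, true)] from rfl, FreeGroup.inv_mk]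
    rw [FreeGroup.mul_mk]
    rfl
  rw [h1, FreeGroup.toWord_mk, FreeGroup.reduce.cons, FreeGroup.reduce_toWord]
  rcases hw : x.toWord with _ | ⟨hd, tl⟩
  · rfl
  · have hne : ¬((i, false).1 = hd.1 ∧ (i, false).2 = !hd.2) := by
      rintro ⟨ha, hb⟩
      apply hx
      rw [hw]
      simp only [List.head?_cons]
      congr 1
      have : hd.2 = true := by
        rcases hhd : hd.2
        · rw [hhd] at hb; simp at hb
        · rfl
      rcases hd with ⟨j, b⟩
      simp only at ha this
      rw [← ha, this]
    simp only [hne, if_false]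

noncomputable def χ (i : Fin 2) (b : Bool) : F2 → ℝ :=
  fun w => if w.toWord.head? = some (i, b) then 1 else 0

lemma χ_bdd (i : Fin 2) (b : Bool) : χ i b ∈ BddFns F2 := by
  refine ⟨1, fun x => ?_⟩
  unfold χ
  split_ifs <;> norm_num

theorem no_mean_F2 (M : InvariantMean F2 F2) : False := by
  classical
  set m := M.toFun with hm
  have mono : ∀ f g : BddFns F2, (∀ x, (f : F2 → ℝ) x ≤ (g : F2 → ℝ) x) →
      m f ≤ m g := by
    intro f g hfg
    have h0 : (0:ℝ) ≤ m (g - f) := by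
      apply M.nonneg
      intro x
      rw [show ((g - f : BddFns F2) : F2 → ℝ) x = (g : F2 → ℝ) x - (f : F2 → ℝ) x from rfl]
      linarith [hfg x]
    rw [map_sub] at h0
    linarith
  -- the lower bound: for each generator i, m (χ i true) + m (χ i false) ≥ 1
  have lower : ∀ i : Fin 2, (1:ℝ) ≤ m ⟨χ i true, χ_bdd i true⟩ + m ⟨χ i false, χ_bdd i false⟩ := by
    intro i
    have hpt : ∀ w : F2, (1:ℝ) ≤ χ i true w + (lshift (FreeGroup.of i) (χ i false)) w := by
      intro w
      unfold lshift
      rcases Classical.em (w.toWord.head? = some (i, true)) with h | h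
      · have h1 : χ i true w = 1 := by unfold χ; rw [if_pos h]
        have h2 : (0:ℝ) ≤ χ i false ((FreeGroup.of i)⁻¹ • w) := by
          unfold χ; split_ifs <;> norm_num
        rw [h1]; linarith
      · have h2 : χ i false ((FreeGroup.of i)⁻¹ • w) = 1 := by
          unfold χ
          rw [if_pos]
          rw [show (FreeGroup.of i)⁻¹ • w = (FreeGroup.of i)⁻¹ * w from rfl]
          rw [head_lemma i w h]
          rfl
        have h1 : (0:ℝ) ≤ χ i true w := by unfold χ; split_ifs <;> norm_num
        rw [h2]; linarith
    have honele : m ⟨fun _ => 1, ⟨1, fun _ => by norm_num⟩⟩ ≤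
        m (⟨χ i true, χ_bdd i true⟩ + ⟨lshift (FreeGroup.of i) (χ i false), lshift_mem _ (χ_bdd i false)⟩) := by
      apply mono
      intro x
      exact hpt x
    rw [map_add, M.norm_one, M.invariant (FreeGroup.of i) ⟨χ i false, χ_bdd i false⟩] at honele
    exact honele
  -- the upper bound: the four sets are disjoint
  have upper : m ⟨χ 0 true, χ_bdd 0 true⟩ + m ⟨χ 0 false, χ_bdd 0 false⟩
      + m ⟨χ 1 true, χ_bdd 1 true⟩ + m ⟨χ 1 false, χ_bdd 1 false⟩ ≤ 1 := by
    have habs : ∀ o : Option (Fin 2 × Bool),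
        (if o = some (0, true) then (1:ℝ) else 0) + (if o = some (0, false) then (1:ℝ) else 0)
        + (if o = some (1, true) then (1:ℝ) else 0) + (if o = some (1, false) then (1:ℝ) else 0)
        ≤ 1 := by
      rintro (_ | ⟨⟨j, b⟩⟩)
      · simp
      · fin_cases j <;> rcases b <;> norm_num
    have hpt : ∀ w : F2, χ 0 true w + χ 0 false w + χ 1 true w + χ 1 false w ≤ 1 := by
      intro w
      unfold χ
      exact habs w.toWord.head?
    have h3 : m (⟨χ 0 true, χ_bdd 0 true⟩ + ⟨χ 0 false, χ_bdd 0 false⟩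
        + ⟨χ 1 true, χ_bdd 1 true⟩ + ⟨χ 1 false, χ_bdd 1 false⟩) ≤
        m ⟨fun _ => 1, ⟨1, fun _ => by norm_num⟩⟩ := by
      apply mono
      intro x
      exact hpt x
    rw [map_add, map_add, map_add, M.norm_one] at h3
    exact h3
  have l0 := lower 0
  have l1 := lower 1
  linarith

/-! ### The quotient map H₀ → F₂ -/

noncomputable def eH0 : F4 ≃* ↥H0 :=
  (MonoidHom.ofInjective β_inj).trans (MulEquiv.subgroupCongr H0_eq_range.symm)

lemma eH0_coe (u : F4) : ((eH0 u : ↥H0) : ↥Gsub) = β u := rfl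

noncomputable def π₀ : ↥H0 →* F2 := π.comp eH0.symm.toMonoidHom

lemma π₀_β (u : F4) (h : β u ∈ H0) : π₀ ⟨β u, h⟩ = π u := by
  have h1 : eH0 u = ⟨β u, h⟩ := Subtype.ext (eH0_coe u)
  show π (eH0.symm ⟨β u, h⟩) = π u
  rw [← h1, MulEquiv.symm_apply_apply]

lemma π₀_surj : Function.Surjective π₀ := by
  have : (π₀ : ↥H0 → F2) = π ∘ (eH0.symm : ↥H0 → F4) := rfl
  rw [this]
  exact π_surj.comp eH0.symm.surjective

lemma π₀_K : ∀ x : ↥H0, x ∈ KK.subgroupOf H0 → π₀ x = 1 := by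
  intro x hx
  rw [Subgroup.mem_subgroupOf] at hx
  have hKle : KK ≤ Subgroup.map H0.subtype π₀.ker := by
    rw [KK, Subgroup.closure_le]
    rintro y ⟨i, rfl⟩
    refine ⟨⟨β (φ (FreeGroup.of i)), βmem_H0 _⟩, ?_, rfl⟩
    simp only [SetLike.mem_coe, MonoidHom.mem_ker]
    rw [π₀_β]
    exact π_φ _
  obtain ⟨y, hy, hyx⟩ := hKle hx
  have hxy : y = x := Subtype.ext hyx
  rw [← hxy]
  exact hy

lemma K_not_coamenable : ¬ (KK.subgroupOf H0).Coamenable := by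
  rintro ⟨M⟩
  obtain ⟨M2⟩ := transport π₀ π₀_surj (KK.subgroupOf H0) π₀_K M
  exact no_mean_F2 M2

end MPX

/-- There are triples `K ≤ H₀ ≤ G` of finitely generated groups with `K`
co-amenable in `G` but not in `H₀`. -/
theorem exists_fg_coamenable_not_hereditary :
    ∃ (G : GrpCat) (H₀ K : Subgroup G), K ≤ H₀ ∧
      Group.FG G ∧ Group.FG H₀ ∧ Group.FG K ∧
      K.Coamenable ∧ ¬ (K.subgroupOf H₀).Coamenable := by
  exact ⟨GrpCat.of ↥MPX.Gsub, MPX.H0, MPX.KK, MPX.K_le_H0, MPX.FG_G, MPX.FG_H0, MPX.FG_K,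
    MPX.K_coamenable, MPX.K_not_coamenable⟩
end

section
/- Let K be a group and θ : K → K an injective group homomorphism, and let G = K*_θ be the associated HNN extension. Then the canonical image of K in G is co-amenable in G. -/
open Filter

namespace BLAux

/-- Cesàro averages. -/
noncomputable def avg (u : ℕ → ℝ) (n : ℕ) : ℝ := (∑ k ∈ Finset.range (n + 1), u k) / (n + 1)

lemma npos (n : ℕ) : (0:ℝ) < (n:ℝ) + 1 := by positivity

lemma avg_le_of_le {u : ℕ → ℝ} {c : ℝ} (h : ∀ n, u n ≤ c) (n : ℕ) : avg u n ≤ c := by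
  rw [avg, div_le_iff₀ (npos n)]
  calc ∑ k ∈ Finset.range (n + 1), u k ≤ ∑ k ∈ Finset.range (n + 1), c :=
        Finset.sum_le_sum fun i _ => h i
    _ = ((n:ℝ) + 1) * c := by
        simp [Finset.sum_const, Finset.card_range, nsmul_eq_mul]
    _ = c * ((n:ℝ) + 1) := by ring

lemma abs_avg_le {u : ℕ → ℝ} {C : ℝ} (h : ∀ n, |u n| ≤ C) (n : ℕ) : |avg u n| ≤ C := by
  rw [avg, abs_div, abs_of_pos (npos n), div_le_iff₀ (npos n)]
  calc |∑ k ∈ Finset.range (n + 1), u k| ≤ ∑ k ∈ Finset.range (n + 1), |u k| :=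
        Finset.abs_sum_le_sum_abs _ _
    _ ≤ ∑ k ∈ Finset.range (n + 1), C := Finset.sum_le_sum fun i _ => h i
    _ = ((n:ℝ) + 1) * C := by
        simp [Finset.sum_const, Finset.card_range, nsmul_eq_mul]
    _ = C * ((n:ℝ) + 1) := by ring

lemma avg_add (u v : ℕ → ℝ) (n : ℕ) : avg (u + v) n = avg u n + avg v n := by
  simp [avg, Finset.sum_add_distrib, add_div]

lemma avg_smul (c : ℝ) (u : ℕ → ℝ) (n : ℕ) : avg (c • u) n = c * avg u n := by
  simp [avg, ← Finset.mul_sum, mul_div_assoc]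

/-- The sublinear functional: limsup of Cesàro averages. -/
noncomputable def N (f : BddFns ℕ) : ℝ := limsup (avg (f : ℕ → ℝ)) atTop

lemma bddAbove (f : BddFns ℕ) : IsBoundedUnder (· ≤ ·) atTop (avg (f : ℕ → ℝ)) := by
  obtain ⟨C, hC⟩ := f.2
  exact isBoundedUnder_of ⟨C, fun n => (abs_le.1 (abs_avg_le hC n)).2⟩

lemma bddBelow (f : BddFns ℕ) : IsBoundedUnder (· ≥ ·) atTop (avg (f : ℕ → ℝ)) := by
  obtain ⟨C, hC⟩ := f.2
  exact isBoundedUnder_of ⟨-C, fun n => (abs_le.1 (abs_avg_le hC n)).1⟩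

lemma cobdd (f : BddFns ℕ) : IsCoboundedUnder (· ≤ ·) atTop (avg (f : ℕ → ℝ)) :=
  (bddBelow f).isCoboundedUnder_le

lemma N_le_of_le {f : BddFns ℕ} {c : ℝ} (h : ∀ n, (f : ℕ → ℝ) n ≤ c) : N f ≤ c :=
  limsup_le_of_le (cobdd f) (Eventually.of_forall (avg_le_of_le h))

lemma N_add (f g : BddFns ℕ) : N (f + g) ≤ N f + N g := by
  have h : avg ((f + g : BddFns ℕ) : ℕ → ℝ) = avg (f : ℕ → ℝ) + avg (g : ℕ → ℝ) := by
    funext n; exact avg_add _ _ n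
  rw [N, h]
  exact limsup_add_le (bddBelow f) (bddAbove f) (cobdd g) (bddAbove g)

lemma N_smul (c : ℝ) (hc : 0 < c) (f : BddFns ℕ) : N (c • f) = c * N f := by
  have h : avg ((c • f : BddFns ℕ) : ℕ → ℝ) = fun n => (OrderIso.mulLeft₀ c hc) (avg (f : ℕ → ℝ) n) := by
    funext n; simpa using avg_smul c (f : ℕ → ℝ) n
  rw [N, N, h, ← OrderIso.limsup_apply (OrderIso.mulLeft₀ c hc) (bddAbove f) (cobdd f)
    (h ▸ bddAbove (c • f)) (h ▸ cobdd (c • f))]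
  simp [OrderIso.mulLeft₀]
  rfl

theorem exists_banachLimit :
    ∃ L : (BddFns ℕ) →ₗ[ℝ] ℝ,
      (∀ f : BddFns ℕ, (f : ℕ → ℝ) = (fun _ => 1) → L f = 1) ∧
      (∀ f : BddFns ℕ, (∀ n, 0 ≤ (f : ℕ → ℝ) n) → 0 ≤ L f) ∧
      (∀ f g : BddFns ℕ, (∀ n, (g : ℕ → ℝ) n = (f : ℕ → ℝ) (n + 1)) → L g = L f) := by
  obtain ⟨L, -, hL⟩ := exists_extension_of_le_sublinear ((0 : BddFns ℕ →ₗ[ℝ] ℝ).toPMap ⊥) N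
    (fun c hc x => N_smul c hc x) N_add
    (by
      rintro ⟨x, hx⟩
      have hx0 : x = 0 := by simpa using hx
      subst hx0
      have h0 : N (0 : BddFns ℕ) = 0 := by
        have : avg ((0 : BddFns ℕ) : ℕ → ℝ) = fun _ => (0:ℝ) := by
          funext n; simp [avg]
        rw [N, this, limsup_const]
      simp [LinearMap.toPMap, h0])
  refine ⟨L, ?_, ?_, ?_⟩
  · intro f hf
    have h1 : L f ≤ 1 := (hL f).trans (N_le_of_le (by rw [hf]; intro n; exact le_rfl))
    have h2 : L (-f) ≤ -1 := (hL (-f)).trans (N_le_of_le ?_)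
    · have := L.map_neg f
      rw [this] at h2; linarith
    · intro n
      show (-(f : ℕ → ℝ)) n ≤ -1
      rw [hf]; norm_num
  · intro f hf
    have h2 : L (-f) ≤ 0 := (hL (-f)).trans (N_le_of_le fun n => by
      show (-(f : ℕ → ℝ)) n ≤ 0
      simpa using hf n)
    rw [L.map_neg] at h2; linarith
  · intro f g hg
    obtain ⟨C, hC⟩ := f.2
    have key : ∀ n, avg ((f - g : BddFns ℕ) : ℕ → ℝ) n =
        ((f : ℕ → ℝ) 0 - (f : ℕ → ℝ) (n + 1)) / (n + 1) := by
      intro n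
      rw [avg]
      congr 1
      have : ∀ k, ((f - g : BddFns ℕ) : ℕ → ℝ) k = (f : ℕ → ℝ) k - (f : ℕ → ℝ) (k + 1) := by
        intro k; simp [hg k]
      simp only [this]
      exact Finset.sum_range_sub' (fun k => (f : ℕ → ℝ) k) (n + 1)
    have htend : Tendsto (avg ((f - g : BddFns ℕ) : ℕ → ℝ)) atTop (nhds 0) := by
      refine squeeze_zero_norm (a := fun n : ℕ => (2 * C) / ((n:ℝ) + 1)) (fun n => ?_) ?_
      · rw [key n, Real.norm_eq_abs, abs_div, abs_of_pos (npos n)]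
        show _ ≤ (2 * C) / ((n:ℝ) + 1)
        gcongr
        calc |(f : ℕ → ℝ) 0 - (f : ℕ → ℝ) (n+1)| ≤ |(f : ℕ → ℝ) 0| + |(f : ℕ → ℝ) (n+1)| :=
              abs_sub _ _
          _ ≤ C + C := add_le_add (hC 0) (hC (n+1))
          _ = 2 * C := by ring
      · have := (tendsto_const_div_atTop_nhds_zero_nat (2 * C)).comp
          (tendsto_add_atTop_nat 1)
        refine this.congr fun n => ?_
        simp [Function.comp]
    have h1 : N (f - g) = 0 := by rw [N]; exact htend.limsup_eq
    have h2 : N (g - f) = 0 := by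
      have : avg ((g - f : BddFns ℕ) : ℕ → ℝ) = fun n => - avg ((f - g : BddFns ℕ) : ℕ → ℝ) n := by
        funext n
        have : ((g - f : BddFns ℕ) : ℕ → ℝ) = -(((f - g : BddFns ℕ) : ℕ → ℝ)) := by
          simp
        rw [this]
        simp only [avg, Pi.neg_apply, Finset.sum_neg_distrib]
        ring
      rw [N, this]
      simpa using htend.neg.limsup_eq
    have e1 : L (f - g) ≤ 0 := (hL _).trans_eq h1
    have e2 : L (g - f) ≤ 0 := (hL _).trans_eq h2
    rw [L.map_sub] at e1 e2
    linarith

end BLAux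


namespace HNNAux

open HNNExtension

lemma t_pow_conj_mem {G : Type*} [Group G] {B : Subgroup G} (φ : (⊤ : Subgroup G) ≃* B)
    (n : ℕ) (k : G) :
    HNNExtension.t ^ n * HNNExtension.of k * (HNNExtension.t ^ n)⁻¹ ∈
      (HNNExtension.of.range : Subgroup (HNNExtension G ⊤ B φ)) := by
  induction n generalizing k with
  | zero => simpa using ⟨k, rfl⟩
  | succ n ih =>
    have h1 : (HNNExtension.of ((φ ⟨k, Subgroup.mem_top k⟩ : B) : G) : HNNExtension G ⊤ B φ)
        = HNNExtension.t * HNNExtension.of k * HNNExtension.t⁻¹ :=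
      HNNExtension.equiv_eq_conj ⟨k, Subgroup.mem_top k⟩
    have h2 := ih ((φ ⟨k, Subgroup.mem_top k⟩ : B) : G)
    have h3 : HNNExtension.t ^ (n + 1) * HNNExtension.of k * (HNNExtension.t ^ (n + 1) : HNNExtension G ⊤ B φ)⁻¹
        = HNNExtension.t ^ n * HNNExtension.of ((φ ⟨k, Subgroup.mem_top k⟩ : B) : G)
            * (HNNExtension.t ^ n)⁻¹ := by
      rw [h1]; group
    rw [h3]; exact h2

lemma invariant_mul {G X : Type*} [Group G] [MulAction G X]
    (m : BddFns X →ₗ[ℝ] ℝ) {a b : G}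
    (ha : ∀ f : BddFns X, m ⟨lshift a (f : X → ℝ), lshift_mem a f.2⟩ = m f)
    (hb : ∀ f : BddFns X, m ⟨lshift b (f : X → ℝ), lshift_mem b f.2⟩ = m f)
    (f : BddFns X) : m ⟨lshift (a * b) (f : X → ℝ), lshift_mem (a * b) f.2⟩ = m f := by
  have h1 : (⟨lshift (a * b) (f : X → ℝ), lshift_mem (a * b) f.2⟩ : BddFns X)
      = ⟨lshift a (lshift b (f : X → ℝ)), lshift_mem a (lshift_mem b f.2)⟩ :=
    Subtype.ext (funext fun y => by simp [lshift, mul_smul])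
  rw [h1]
  exact (ha ⟨lshift b (f : X → ℝ), lshift_mem b f.2⟩).trans (hb f)

lemma invariant_inv {G X : Type*} [Group G] [MulAction G X]
    (m : BddFns X →ₗ[ℝ] ℝ) {a : G}
    (ha : ∀ f : BddFns X, m ⟨lshift a (f : X → ℝ), lshift_mem a f.2⟩ = m f)
    (f : BddFns X) : m ⟨lshift a⁻¹ (f : X → ℝ), lshift_mem a⁻¹ f.2⟩ = m f := by
  have h : m ⟨lshift a (lshift a⁻¹ (f : X → ℝ)), lshift_mem a (lshift_mem a⁻¹ f.2)⟩
      = m ⟨lshift a⁻¹ (f : X → ℝ), lshift_mem a⁻¹ f.2⟩ :=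
    ha ⟨lshift a⁻¹ (f : X → ℝ), lshift_mem a⁻¹ f.2⟩
  have h1 : (⟨lshift a (lshift a⁻¹ (f : X → ℝ)), lshift_mem a (lshift_mem a⁻¹ f.2)⟩ : BddFns X) = f :=
    Subtype.ext (funext fun y => by simp [lshift, smul_smul])
  rw [h1] at h
  exact h.symm

end HNNAux

/-- For any group `K` and injective endomorphism `θ : K → K`, the canonical image
of `K` in the HNN extension `K*_θ = ⟨K, t | t k t⁻¹ = θ(k)⟩` is co-amenable. -/
theorem hnn_base_coamenable {K : Type*} [Group K] (θ : K →* K)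
    (hθ : Function.Injective θ) :
    (HNNExtension.of.range :
      Subgroup (HNNExtension K ⊤ θ.range
        (Subgroup.topEquiv.trans (MonoidHom.ofInjective hθ)))).Coamenable := by
  classical
  obtain ⟨L, hone, hpos, hshift⟩ := BLAux.exists_banachLimit
  letI φ' := Subgroup.topEquiv.trans (MonoidHom.ofInjective hθ)
  letI G := HNNExtension K ⊤ θ.range φ'
  letI H : Subgroup G := HNNExtension.of.range
  let x : ℕ → G ⧸ H := fun n => QuotientGroup.mk ((HNNExtension.t : G)⁻¹ ^ n)
  let T : BddFns (G ⧸ H) →ₗ[ℝ] BddFns ℕ :=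
    { toFun := fun f => ⟨fun n => (f : (G ⧸ H) → ℝ) (x n), by
        obtain ⟨C, hC⟩ := f.2; exact ⟨C, fun n => hC _⟩⟩
      map_add' := fun f g => rfl
      map_smul' := fun c f => rfl }
  refine ⟨⟨L.comp T, ?_, ?_, ?_⟩⟩
  · exact hone _ rfl
  · intro f hf
    exact hpos _ (fun n => hf (x n))
  · intro g
    induction g using HNNExtension.induction_on with
    | of k =>
      intro f
      have hx : ∀ n, (HNNExtension.of k : G)⁻¹ • x n = x n := by
        intro n
        show ((HNNExtension.of k : G)⁻¹ • QuotientGroup.mk ((HNNExtension.t : G)⁻¹ ^ n) : G ⧸ H) = _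
        rw [MulAction.Quotient.smul_mk]
        refine (QuotientGroup.eq).2 ?_
        have hcalc : ((HNNExtension.of k : G)⁻¹ • ((HNNExtension.t : G)⁻¹ ^ n))⁻¹ * (HNNExtension.t : G)⁻¹ ^ n
            = HNNExtension.t ^ n * HNNExtension.of k * ((HNNExtension.t : G) ^ n)⁻¹ := by
          rw [smul_eq_mul, inv_pow]; group
        rw [hcalc]
        exact HNNAux.t_pow_conj_mem φ' n k
      exact congrArg L (Subtype.ext (funext fun n => by
        show (f : (G ⧸ H) → ℝ) ((HNNExtension.of k : G)⁻¹ • x n) = (f : (G ⧸ H) → ℝ) (x n)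
        rw [hx n]))
    | t =>
      intro f
      refine hshift (T f) (T ⟨lshift (HNNExtension.t : G) (f : (G ⧸ H) → ℝ),
        lshift_mem (HNNExtension.t : G) f.2⟩) ?_
      intro n
      have hx2 : (HNNExtension.t : G)⁻¹ • x n = x (n + 1) := by
        show ((HNNExtension.t : G)⁻¹ • QuotientGroup.mk ((HNNExtension.t : G)⁻¹ ^ n) : G ⧸ H)
            = QuotientGroup.mk ((HNNExtension.t : G)⁻¹ ^ (n + 1))
        rw [MulAction.Quotient.smul_mk]
        congr 1
        rw [smul_eq_mul, pow_succ']
      show (f : (G ⧸ H) → ℝ) ((HNNExtension.t : G)⁻¹ • x n) = (f : (G ⧸ H) → ℝ) (x (n + 1))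
      rw [hx2]
    | mul a b ha hb => exact HNNAux.invariant_mul (L.comp T) ha hb
    | inv a ha => exact HNNAux.invariant_inv (L.comp T) ha
end

section
/- Let K ≤ H ≤ G be subgroups of a group G. If H is co-amenable in G and there exists an H-invariant mean on ℓ∞(G/K), then K is co-amenable in G. -/
lemma lshift_lshift {G X : Type*} [Group G] [MulAction G X] (g h : G) (f : X → ℝ) :
    lshift g (lshift h f) = lshift (g * h) f := by
  funext x; simp [lshift, mul_smul]

lemma mean_abs_le_s11 {G X : Type*} [Group G] [MulAction G X] (μ : InvariantMean G X)
    (f : BddFns X) {C : ℝ} (hC : ∀ x, |(f : X → ℝ) x| ≤ C) : |μ.toFun f| ≤ C := by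
  set one : BddFns X := ⟨fun _ => 1, 1, fun _ => by norm_num⟩ with hone_def
  have hone : μ.toFun one = 1 := μ.norm_one
  have h1 : 0 ≤ μ.toFun (C • one - f) := by
    refine μ.nonneg _ (fun x => ?_)
    have := (abs_le.mp (hC x)).2
    have hco : ((C • one - f : BddFns X) : X → ℝ) x = C * 1 - (f : X → ℝ) x := rfl
    rw [hco]; linarith
  have h2 : 0 ≤ μ.toFun (f + C • one) := by
    refine μ.nonneg _ (fun x => ?_)
    have := (abs_le.mp (hC x)).1
    have hco : ((f + C • one : BddFns X) : X → ℝ) x = (f : X → ℝ) x + C * 1 := rfl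
    rw [hco]; linarith
  rw [map_sub, map_smul, hone, smul_eq_mul, mul_one] at h1
  rw [map_add, map_smul, hone, smul_eq_mul, mul_one] at h2
  rw [abs_le]; constructor <;> linarith

/-- If `K ≤ H ≤ G`, `H` is co-amenable in `G`, and there is an `H`-invariant mean
on ℓ∞(G/K), then `K` is co-amenable in `G`. -/
theorem coamenable_of_relative_mean {G : Type*} [Group G] (K H : Subgroup G)
    (hKH : K ≤ H) (hH : H.Coamenable)
    (hm : Nonempty (InvariantMean H (G ⧸ K))) : K.Coamenable := by
  obtain ⟨n⟩ := hH
  obtain ⟨m⟩ := hm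
  -- the induced function on G ⧸ H
  have hwd : ∀ (f : BddFns (G ⧸ K)) (a b : G), a⁻¹ * b ∈ H →
      m.toFun ⟨lshift a⁻¹ (f : (G ⧸ K) → ℝ), lshift_mem _ f.2⟩ =
      m.toFun ⟨lshift b⁻¹ (f : (G ⧸ K) → ℝ), lshift_mem _ f.2⟩ := by
    intro f a b hab
    set h : H := ⟨a⁻¹ * b, hab⟩ with hh
    have key : lshift (h⁻¹ : H) (lshift a⁻¹ (f : (G ⧸ K) → ℝ)) =
        lshift b⁻¹ (f : (G ⧸ K) → ℝ) := by
      have : lshift ((h : G)⁻¹) (lshift a⁻¹ (f : (G ⧸ K) → ℝ)) =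
          lshift b⁻¹ (f : (G ⧸ K) → ℝ) := by
        rw [lshift_lshift]
        congr 1
        simp [hh]
      exact this
    have := m.invariant h⁻¹ ⟨lshift a⁻¹ (f : (G ⧸ K) → ℝ), lshift_mem _ f.2⟩
    rw [← this]
    congr 1
    exact Subtype.ext key
  set F : BddFns (G ⧸ K) → (G ⧸ H) → ℝ := fun f =>
    Quotient.lift (fun g => m.toFun ⟨lshift g⁻¹ (f : (G ⧸ K) → ℝ), lshift_mem _ f.2⟩)
      (fun a b hab => hwd f a b (QuotientGroup.leftRel_apply.mp hab)) with hF
  have hFmk : ∀ (f : BddFns (G ⧸ K)) (g : G),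
      F f (QuotientGroup.mk g) = m.toFun ⟨lshift g⁻¹ (f : (G ⧸ K) → ℝ), lshift_mem _ f.2⟩ :=
    fun f g => rfl
  have hFbdd : ∀ f : BddFns (G ⧸ K), F f ∈ BddFns (G ⧸ H) := by
    intro f
    obtain ⟨C, hC⟩ := f.2
    refine ⟨C, ?_⟩
    refine Quotient.ind (fun g => ?_)
    rw [hFmk]
    exact mean_abs_le_s11 m _ (fun x => hC _)
  refine ⟨⟨?_, ?_, ?_, ?_⟩⟩
  · exact
      { toFun := fun f => n.toFun ⟨F f, hFbdd f⟩
        map_add' := by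
          intro f g
          have : F (f + g) = F f + F g := by
            funext x
            induction x using Quotient.ind with
            | _ a =>
              show F (f + g) (QuotientGroup.mk a) = F f (QuotientGroup.mk a) + F g (QuotientGroup.mk a)
              rw [hFmk, hFmk, hFmk, ← map_add]
              congr 1
          show n.toFun ⟨F (f + g), hFbdd _⟩ = n.toFun ⟨F f, hFbdd f⟩ + n.toFun ⟨F g, hFbdd g⟩
          rw [show (⟨F (f+g), hFbdd _⟩ : BddFns (G ⧸ H)) = ⟨F f, hFbdd f⟩ + ⟨F g, hFbdd g⟩ from
            Subtype.ext this, map_add]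
        map_smul' := by
          intro c f
          have : F (c • f) = c • F f := by
            funext x
            induction x using Quotient.ind with
            | _ a =>
              show F (c • f) (QuotientGroup.mk a) = c • F f (QuotientGroup.mk a)
              rw [hFmk, hFmk, ← map_smul]
              congr 1
          show n.toFun ⟨F (c • f), hFbdd _⟩ = (RingHom.id ℝ) c • n.toFun ⟨F f, hFbdd f⟩
          rw [show (⟨F (c • f), hFbdd _⟩ : BddFns (G ⧸ H)) = c • ⟨F f, hFbdd f⟩ from
            Subtype.ext this, map_smul]
          rfl
      }
  · show n.toFun _ = 1
    have : (⟨F ⟨(fun _ => 1), ⟨1, fun _ => by norm_num⟩⟩, hFbdd _⟩ : BddFns (G ⧸ H)) =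
        ⟨(fun _ => 1), ⟨1, fun _ => by norm_num⟩⟩ := by
      refine Subtype.ext (funext ?_)
      refine Quotient.ind (fun g => ?_)
      show F _ (QuotientGroup.mk g) = 1
      rw [hFmk]
      exact m.norm_one
    rw [this]
    exact n.norm_one
  · intro f hf
    refine n.nonneg _ ?_
    refine Quotient.ind (fun g => ?_)
    show 0 ≤ F f (QuotientGroup.mk g)
    rw [hFmk]
    exact m.nonneg _ (fun x => hf _)
  · intro g f
    show n.toFun _ = n.toFun _
    have key : F ⟨lshift g (f : (G ⧸ K) → ℝ), lshift_mem g f.2⟩ = lshift g (F f) := by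
      funext x
      induction x using Quotient.ind with
      | _ a =>
        show F _ (QuotientGroup.mk a) = F f (g⁻¹ • QuotientGroup.mk a)
        have : g⁻¹ • (QuotientGroup.mk a : G ⧸ H) = QuotientGroup.mk (g⁻¹ * a) := rfl
        rw [this, hFmk, hFmk]
        congr 1
        refine Subtype.ext ?_
        show lshift a⁻¹ (lshift g (f : (G ⧸ K) → ℝ)) = lshift (g⁻¹ * a)⁻¹ (f : (G ⧸ K) → ℝ)
        rw [lshift_lshift, mul_inv_rev, inv_inv]
    have := n.invariant g ⟨F f, hFbdd f⟩
    rw [← this]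
    congr 1
    exact Subtype.ext key
end

section
/- Let G be a group, K a subgroup of G, and (H_k)_{k∈ℕ} an increasing sequence of subgroups of G whose union is a subgroup H. If for every k there exists a point of the coset space G/K fixed by every element of H_k (equivalently, there exists g_k ∈ G with H_k ≤ g_k K g_k⁻¹), then there exists an H-invariant mean on ℓ∞(G/K). -/
/-- If `H` is the union of an increasing sequence of subgroups `Hₖ`, and for every `k`
some point of `G/K` is fixed by all of `Hₖ`, then there is an `H`-invariant mean
on ℓ∞(G/K). -/
theorem exists_invariant_mean_of_increasing_fixed_points {G : Type*} [Group G]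
    (K : Subgroup G) (Hk : ℕ → Subgroup G) (hmono : Monotone Hk)
    (H : Subgroup G) (hH : (H : Set G) = ⋃ k, (Hk k : Set G))
    (hfix : ∀ k, ∃ x : G ⧸ K, ∀ h ∈ Hk k, h • x = x) :
    Nonempty (InvariantMean H (G ⧸ K)) := by
  classical
  choose x hx using hfix
  obtain ⟨U, hU⟩ := Ultrafilter.exists_le (Filter.atTop : Filter ℕ)
  have hex : ∀ f : BddFns (G ⧸ K), ∃ L : ℝ,
      Filter.Tendsto (fun k => (f : (G ⧸ K) → ℝ) (x k)) U (nhds L) := by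
    intro f
    obtain ⟨C, hC⟩ := f.2
    obtain ⟨L, _, hL⟩ := (isCompact_Icc (a := -C) (b := C)).ultrafilter_le_nhds
      (U.map (fun k => (f : (G ⧸ K) → ℝ) (x k))) (by
        simp only [Ultrafilter.coe_map, Filter.le_principal_iff, Filter.mem_map]
        exact Filter.univ_mem' (fun k => abs_le.mp (hC (x k))))
    exact ⟨L, hL⟩
  choose m hm using hex
  refine ⟨⟨⟨⟨m, ?_⟩, ?_⟩, ?_, ?_, ?_⟩⟩
  · intro f g
    exact tendsto_nhds_unique (hm (f + g)) ((hm f).add (hm g))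
  · intro c f
    exact tendsto_nhds_unique (hm (c • f)) ((hm f).const_mul c)
  · exact tendsto_nhds_unique (hm _) tendsto_const_nhds
  · intro f hf
    exact ge_of_tendsto' (hm f) (fun k => hf (x k))
  · intro g f
    refine tendsto_nhds_unique (hm _) ((hm f).congr' ?_)
    have hg : (g : G) ∈ ⋃ k, (Hk k : Set G) := by rw [← hH]; exact g.2
    obtain ⟨s, ⟨k0, rfl⟩, hk0⟩ := hg
    have : ∀ k ≥ k0, (f : (G ⧸ K) → ℝ) (x k)
        = (f : (G ⧸ K) → ℝ) (g⁻¹ • x k) := by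
      intro k hk
      have hfix : (g : G) • x k = x k := hx k _ (hmono hk hk0)
      have : (g : G)⁻¹ • x k = x k := by
        conv_lhs => rw [← hfix]
        simp
      have hgi : g⁻¹ • x k = x k := this
      rw [hgi]
    have hev : ∀ᶠ k in (U : Filter ℕ),
        (f : (G ⧸ K) → ℝ) (x k) = lshift g (f : (G ⧸ K) → ℝ) (x k) := by
      apply hU
      filter_upwards [Filter.eventually_ge_atTop k0] with k hk
      exact this k hk
    exact hev
end

section
/- Let Q be any group, let K = ⊕_{n≥0} Q be the restricted direct product of copies of Q indexed by the natural numbers, and let K₁ = ⊕_{n≥1} Q be the subgroup of elements whose coordinate at index 0 is trivial. Then K₁ is co-amenable in K if and only if Q is amenable. -/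
open Function

/-- The restricted direct product `⊕_{n ≥ 0} Q`: functions `ℕ → Q` equal to `1`
outside a finite set, as a subgroup of `ℕ → Q`. -/
def restrictedProd (I : Type*) (Q : Type*) [Group Q] : Subgroup (I → Q) where
  carrier := {f | (mulSupport f).Finite}
  mul_mem' := fun hf hg => ((hf.union hg).subset (mulSupport_mul _ _))
  one_mem' := by simp [Set.mem_setOf_eq, mulSupport_one]
  inv_mem' := fun hf => by simpa [Set.mem_setOf_eq, mulSupport_inv] using hf

/-- The subgroup `K₁ = ⊕_{n ≥ 1} Q` of `K = ⊕_{n ≥ 0} Q` of elements whose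
coordinate at index `0` is trivial. -/
def trivialAtZero (Q : Type*) [Group Q] : Subgroup (restrictedProd ℕ Q) where
  carrier := {f | (f : ℕ → Q) 0 = 1}
  mul_mem' := fun {f g} hf hg => by simp [Set.mem_setOf_eq] at *; simp [hf, hg]
  one_mem' := rfl
  inv_mem' := fun {f} hf => by simp [Set.mem_setOf_eq] at *; simp [hf]


/-- Composition with a map, as a linear map on bounded functions. -/
def compBdd {X Y : Type*} (e : X → Y) : BddFns Y →ₗ[ℝ] BddFns X where
  toFun f := ⟨fun x => (f : Y → ℝ) (e x), by
    obtain ⟨C, hC⟩ := f.2; exact ⟨C, fun x => hC _⟩⟩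
  map_add' f g := rfl
  map_smul' c f := rfl

lemma invariantMean_transfer {G H X Y : Type*} [Group G] [Group H]
    [MulAction G X] [MulAction H Y] (φ : G →* H) (hφ : Function.Surjective φ)
    (e : X ≃ Y) (he : ∀ (g : G) (x : X), e (g • x) = φ g • e x) :
    Nonempty (InvariantMean G X) ↔ Nonempty (InvariantMean H Y) := by
  constructor
  · rintro ⟨m⟩
    refine ⟨⟨m.toFun.comp (compBdd e), ?_, ?_, ?_⟩⟩
    · exact m.norm_one
    · intro f hf
      exact m.nonneg _ (fun x => hf (e x))
    · intro h f
      obtain ⟨g, rfl⟩ := hφ h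
      have key : (compBdd e) ⟨lshift (φ g) (f : Y → ℝ), lshift_mem _ f.2⟩
          = ⟨lshift g ((compBdd e f : X → ℝ)), lshift_mem g (compBdd e f).2⟩ := by
        apply Subtype.ext
        funext x
        show (f : Y → ℝ) ((φ g)⁻¹ • e x) = (f : Y → ℝ) (e (g⁻¹ • x))
        rw [he g⁻¹ x, map_inv]
      simp only [LinearMap.comp_apply, key]
      exact m.invariant g (compBdd e f)
  · rintro ⟨m⟩
    refine ⟨⟨m.toFun.comp (compBdd e.symm), ?_, ?_, ?_⟩⟩
    · exact m.norm_one
    · intro f hf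
      exact m.nonneg _ (fun y => hf (e.symm y))
    · intro g f
      have key : (compBdd e.symm) ⟨lshift g (f : X → ℝ), lshift_mem _ f.2⟩
          = ⟨lshift (φ g) ((compBdd e.symm f : Y → ℝ)), lshift_mem (φ g) (compBdd e.symm f).2⟩ := by
        apply Subtype.ext
        funext y
        show (f : X → ℝ) (g⁻¹ • e.symm y) = (f : X → ℝ) (e.symm ((φ g)⁻¹ • y))
        have : g⁻¹ • e.symm y = e.symm ((φ g)⁻¹ • y) := by
          apply e.injective
          rw [he g⁻¹ (e.symm y), Equiv.apply_symm_apply, Equiv.apply_symm_apply, map_inv]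
        rw [this]
      simp only [LinearMap.comp_apply, key]
      exact m.invariant (φ g) (compBdd e.symm f)

/-- Evaluation at 0 as a group hom on the restricted product. -/
def evalZero (Q : Type*) [Group Q] : (restrictedProd ℕ Q) →* Q :=
  (Pi.evalMonoidHom (fun _ => Q) 0).comp (restrictedProd ℕ Q).subtype

/-- A section of `evalZero`. -/
def secZero (Q : Type*) [Group Q] (q : Q) : restrictedProd ℕ Q :=
  ⟨Pi.mulSingle 0 q, (Set.finite_singleton 0).subset Pi.mulSupport_mulSingle_subset⟩

lemma evalZero_secZero (Q : Type*) [Group Q] (q : Q) : evalZero Q (secZero Q q) = q := by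
  simp [evalZero, secZero]

/-- The coset space `K ⧸ K₁` is equivalent to `Q`. -/
def cosetEquiv (Q : Type*) [Group Q] : (restrictedProd ℕ Q ⧸ trivialAtZero Q) ≃ Q where
  toFun x := Quotient.liftOn' x (fun g => evalZero Q g) (by
    intro a b hab
    have h : a⁻¹ * b ∈ trivialAtZero Q := QuotientGroup.leftRel_apply.mp hab
    have h' : (evalZero Q a)⁻¹ * evalZero Q b = 1 := by
      exact h
    have := mul_eq_one_iff_inv_eq.mp h'
    show evalZero Q a = evalZero Q b
    rw [← inv_inv (evalZero Q a), this])
  invFun q := QuotientGroup.mk (secZero Q q)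
  left_inv x := by
    induction x using QuotientGroup.induction_on with
    | H g =>
      show QuotientGroup.mk (secZero Q (evalZero Q g)) = _
      rw [QuotientGroup.eq]
      show (((secZero Q (evalZero Q g))⁻¹ * g : restrictedProd ℕ Q) : ℕ → Q) 0 = 1
      simp [secZero, evalZero]
  right_inv q := evalZero_secZero Q q

lemma cosetEquiv_equivariant (Q : Type*) [Group Q] (g : restrictedProd ℕ Q)
    (x : restrictedProd ℕ Q ⧸ trivialAtZero Q) :
    cosetEquiv Q (g • x) = evalZero Q g • cosetEquiv Q x := by
  induction x using QuotientGroup.induction_on with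
  | H a =>
    have : g • (QuotientGroup.mk a : restrictedProd ℕ Q ⧸ trivialAtZero Q)
        = QuotientGroup.mk (g * a) := rfl
    rw [this]
    show evalZero Q (g * a) = evalZero Q g * evalZero Q a
    exact map_mul _ _ _

/-- `K₁ = ⊕_{n ≥ 1} Q` is co-amenable in `K = ⊕_{n ≥ 0} Q` iff `Q` is amenable. -/
theorem trivialAtZero_coamenable_iff (Q : Type*) [Group Q] :
    (trivialAtZero Q).Coamenable ↔ AmenableGroup Q := by
  refine invariantMean_transfer (evalZero Q) (fun q => ⟨secZero Q q, evalZero_secZero Q q⟩)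
    (cosetEquiv Q) (cosetEquiv_equivariant Q)
end
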